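/- arXiv:2501.17109 — 8 statements merged into one kernel-verified Lean document; each statement's English description precedes it below -/
import Mathlib

section
/- For an MPS tensor A, the following equality of subspaces of H^{⊗(k+1)} holds: (S_k(A) ⊗ S_1(A)) ∩ (S_1(A) ⊗ S_k(A)) = (S_k(A) ⊗ H) ∩ (H ⊗ S_k(A)), for k ≥ 2. -/
open scoped BigOperators

noncomputable section

def prodA {d D : ℕ} (A : Fin d → Matrix (Fin D) (Fin D) ℂ) {k : ℕ} (s : Fin k → Fin d) :
    Matrix (Fin D) (Fin D) ℂ :=
  (List.ofFn fun t => A (s t)).prod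

def mpsVec {d D : ℕ} (A : Fin d → Matrix (Fin D) (Fin D) ℂ) (X : Matrix (Fin D) (Fin D) ℂ)
    (k : ℕ) : (Fin k → Fin d) → ℂ :=
  fun s => (X * prodA A s).trace

def mpsSpace {d D : ℕ} (A : Fin d → Matrix (Fin D) (Fin D) ℂ) (k : ℕ) :
    Submodule ℂ ((Fin k → Fin d) → ℂ) :=
  Submodule.span ℂ (Set.range fun X => mpsVec A X k)

/-- S ⊗ T inside H^{⊗(k+1)}, where S lives on the first k sites and T on the last site. -/
def tensSnoc {d k : ℕ} (S : Submodule ℂ ((Fin k → Fin d) → ℂ))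
    (T : Submodule ℂ ((Fin 1 → Fin d) → ℂ)) :
    Submodule ℂ ((Fin (k + 1) → Fin d) → ℂ) :=
  Submodule.span ℂ
    {v | ∃ f ∈ S, ∃ g ∈ T,
      v = fun s => f (fun t => s (Fin.castSucc t)) * g (fun _ => s (Fin.last k))}

/-- T ⊗ S inside H^{⊗(k+1)}, where T lives on the first site and S on the last k sites. -/
def tensCons {d k : ℕ} (T : Submodule ℂ ((Fin 1 → Fin d) → ℂ))
    (S : Submodule ℂ ((Fin k → Fin d) → ℂ)) :
    Submodule ℂ ((Fin (k + 1) → Fin d) → ℂ) :=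
  Submodule.span ℂ
    {v | ∃ f ∈ S, ∃ g ∈ T,
      v = fun s => g (fun _ => s 0) * f (fun t => s t.succ)}

/- ### Auxiliary material -/

namespace MPSAux

variable {d D k m : ℕ}

lemma snoc_eq_cons (s' : Fin (m + 1) → Fin d) (x : Fin d) :
    Fin.snoc s' x
      = @Fin.cons (m + 1) (fun _ => Fin d) (s' 0)
          (Fin.snoc (fun t : Fin m => s' t.succ) x) := by
  funext i
  refine Fin.lastCases ?_ (fun j => ?_) i
  · rw [Fin.snoc_last, show (Fin.last (m + 1)) = (Fin.last m).succ from (Fin.succ_last m).symm,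
      Fin.cons_succ, Fin.snoc_last]
  · rw [Fin.snoc_castSucc]
    refine Fin.cases ?_ (fun r => ?_) j
    · simp
    · rw [show (Fin.castSucc r.succ) = (Fin.castSucc r).succ from rfl, Fin.cons_succ,
        Fin.snoc_castSucc]

lemma cons_eq_snoc (s' : Fin (m + 1) → Fin d) (x : Fin d) :
    Fin.cons x s'
      = @Fin.snoc (m + 1) (fun _ => Fin d) (Fin.cons x fun t : Fin m => s' t.castSucc)
          (s' (Fin.last m)) := by
  funext i
  refine Fin.lastCases ?_ (fun j => ?_) i
  · rw [Fin.snoc_last, show (Fin.last (m + 1)) = (Fin.last m).succ from (Fin.succ_last m).symm,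
      Fin.cons_succ]
  · rw [Fin.snoc_castSucc]
    refine Fin.cases ?_ (fun r => ?_) j
    · simp
    · rw [show (Fin.castSucc r.succ) = (Fin.castSucc r).succ from rfl, Fin.cons_succ,
        Fin.cons_succ]

/-- Linear map: evaluate last coordinate at `i`. -/
def evalSnocL (d : ℕ) (k : ℕ) (i : Fin d) :
    ((Fin (k + 1) → Fin d) → ℂ) →ₗ[ℂ] ((Fin k → Fin d) → ℂ) where
  toFun v := fun s' => v (Fin.snoc s' i)
  map_add' _ _ := rfl
  map_smul' _ _ := rfl

/-- Linear map: evaluate first coordinate at `j`. -/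
def evalConsL (d : ℕ) (k : ℕ) (j : Fin d) :
    ((Fin (k + 1) → Fin d) → ℂ) →ₗ[ℂ] ((Fin k → Fin d) → ℂ) where
  toFun v := fun s' => v (Fin.cons j s')
  map_add' _ _ := rfl
  map_smul' _ _ := rfl

/-- Linear map: fix all but the last coordinate. -/
def lastRowL (d : ℕ) (m : ℕ) (s'' : Fin m → Fin d) :
    ((Fin (m + 1) → Fin d) → ℂ) →ₗ[ℂ] ((Fin 1 → Fin d) → ℂ) where
  toFun v := fun u => v (Fin.snoc s'' (u 0))
  map_add' _ _ := rfl
  map_smul' _ _ := rfl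

/-- Linear map: fix all but the first coordinate. -/
def firstRowL (d : ℕ) (m : ℕ) (s'' : Fin m → Fin d) :
    ((Fin (m + 1) → Fin d) → ℂ) →ₗ[ℂ] ((Fin 1 → Fin d) → ℂ) where
  toFun v := fun u => v (Fin.cons (u 0) s'')
  map_add' _ _ := rfl
  map_smul' _ _ := rfl

lemma prodA_cons (A : Fin d → Matrix (Fin D) (Fin D) ℂ) (s'' : Fin m → Fin d) (x : Fin d) :
    prodA A (Fin.cons x s'') = A x * prodA A s'' := by
  unfold prodA
  simp [List.ofFn_succ]

lemma prodA_snoc (A : Fin d → Matrix (Fin D) (Fin D) ℂ) (s'' : Fin m → Fin d) (x : Fin d) :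
    prodA A (Fin.snoc s'' x) = prodA A s'' * A x := by
  induction m with
  | zero => simp [prodA, List.ofFn_succ, Fin.snoc]
  | succ n ih =>
    rw [snoc_eq_cons s'' x, prodA_cons, ih, ← mul_assoc]
    congr 1
    show _ = (List.ofFn fun t : Fin (n + 1) => A (s'' t)).prod
    rw [List.ofFn_succ]
    rfl

lemma prodA_one (A : Fin d → Matrix (Fin D) (Fin D) ℂ) (u : Fin 1 → Fin d) :
    prodA A u = A (u 0) := by
  simp [prodA, List.ofFn_succ]

/-- Slicing the last coordinate of `S_{m+1}` lands in `S_1`. -/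
lemma lastRow_mem (A : Fin d → Matrix (Fin D) (Fin D) ℂ) (s'' : Fin m → Fin d)
    {f : (Fin (m + 1) → Fin d) → ℂ} (hf : f ∈ mpsSpace A (m + 1)) :
    lastRowL d m s'' f ∈ mpsSpace A 1 := by
  have h : mpsSpace A (m + 1) ≤ (mpsSpace A 1).comap (lastRowL d m s'') := by
    rw [mpsSpace, Submodule.span_le]
    rintro _ ⟨X, rfl⟩
    refine Submodule.subset_span ⟨X * prodA A s'', ?_⟩
    funext u
    show ((X * prodA A s'') * prodA A u).trace = (X * prodA A (Fin.snoc s'' (u 0))).trace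
    rw [prodA_one, prodA_snoc, mul_assoc]
  exact h hf

/-- Slicing the first coordinate of `S_{m+1}` lands in `S_1`. -/
lemma firstRow_mem (A : Fin d → Matrix (Fin D) (Fin D) ℂ) (s'' : Fin m → Fin d)
    {f : (Fin (m + 1) → Fin d) → ℂ} (hf : f ∈ mpsSpace A (m + 1)) :
    firstRowL d m s'' f ∈ mpsSpace A 1 := by
  have h : mpsSpace A (m + 1) ≤ (mpsSpace A 1).comap (firstRowL d m s'') := by
    rw [mpsSpace, Submodule.span_le]
    rintro _ ⟨X, rfl⟩
    refine Submodule.subset_span ⟨prodA A s'' * X, ?_⟩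
    funext u
    show ((prodA A s'' * X) * prodA A u).trace = (X * prodA A (Fin.cons (u 0) s'')).trace
    rw [prodA_one, prodA_cons, mul_assoc, Matrix.trace_mul_comm (prodA A s''), mul_assoc]
  exact h hf

/-- Slices of `tensSnoc S T` in the last coordinate lie in `S`. -/
lemma snoc_slice_mem {S : Submodule ℂ ((Fin k → Fin d) → ℂ)}
    {T : Submodule ℂ ((Fin 1 → Fin d) → ℂ)} {v : (Fin (k + 1) → Fin d) → ℂ}
    (hv : v ∈ tensSnoc S T) (i : Fin d) : evalSnocL d k i v ∈ S := by
  have h : tensSnoc S T ≤ S.comap (evalSnocL d k i) := by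
    rw [tensSnoc, Submodule.span_le]
    rintro _ ⟨f, hf, g, hg, rfl⟩
    have : (evalSnocL d k i fun s =>
        f (fun t => s (Fin.castSucc t)) * g (fun _ => s (Fin.last k)))
        = g (fun _ => i) • f := by
      funext s'
      simp [evalSnocL, mul_comm]
    simpa [Submodule.mem_comap, this] using S.smul_mem _ hf
  exact h hv

/-- Slices of `tensCons T S` in the first coordinate lie in `S`. -/
lemma cons_slice_mem {S : Submodule ℂ ((Fin k → Fin d) → ℂ)}
    {T : Submodule ℂ ((Fin 1 → Fin d) → ℂ)} {v : (Fin (k + 1) → Fin d) → ℂ}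
    (hv : v ∈ tensCons T S) (j : Fin d) : evalConsL d k j v ∈ S := by
  have h : tensCons T S ≤ S.comap (evalConsL d k j) := by
    rw [tensCons, Submodule.span_le]
    rintro _ ⟨f, hf, g, hg, rfl⟩
    have : (evalConsL d k j fun s => g (fun _ => s 0) * f (fun t => s t.succ))
        = g (fun _ => j) • f := by
      funext s'
      simp [evalConsL]
    simpa [Submodule.mem_comap, this] using S.smul_mem _ hf
  exact h hv

/-- Build membership in `tensSnoc S T` from slice conditions. -/
lemma mem_tensSnoc {S : Submodule ℂ ((Fin k → Fin d) → ℂ)}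
    {T : Submodule ℂ ((Fin 1 → Fin d) → ℂ)} {v : (Fin (k + 1) → Fin d) → ℂ}
    (hc : ∀ i, (fun s' => v (Fin.snoc s' i)) ∈ S)
    (hr : ∀ s', (fun u : Fin 1 → Fin d => v (Fin.snoc s' (u 0))) ∈ T) :
    v ∈ tensSnoc S T := by
  obtain ⟨q, hq⟩ := Submodule.exists_isCompl T
  set π : ((Fin 1 → Fin d) → ℂ) →ₗ[ℂ] ((Fin 1 → Fin d) → ℂ) :=
    T.subtype ∘ₗ (T.linearProjOfIsCompl q hq) with hπ
  have hπmem : ∀ x, π x ∈ T := fun x => (T.linearProjOfIsCompl q hq x).2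
  have hπid : ∀ x ∈ T, π x = x := by
    intro x hx
    show T.subtype (T.projectionOnto q hq x) = x
    rw [show x = ((⟨x, hx⟩ : T) : (Fin 1 → Fin d) → ℂ) from rfl,
      Submodule.linearProjOfIsCompl_apply_left]
    rfl
  have key : v = ∑ u : Fin 1 → Fin d, fun s =>
      v (Fin.snoc (fun t => s (Fin.castSucc t)) (u 0)) *
        π (Pi.single u 1) (fun _ => s (Fin.last k)) := by
    funext s
    rw [Finset.sum_apply]
    set r : (Fin 1 → Fin d) → ℂ :=
      fun u => v (Fin.snoc (fun t => s (Fin.castSucc t)) (u 0)) with hrdef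
    have hrT : r ∈ T := hr _
    have hdec : r = ∑ u, r u • (Pi.single u 1 : (Fin 1 → Fin d) → ℂ) := by
      funext w
      simp [Finset.sum_apply, Pi.single_apply]
    have h2 : π r = ∑ u, r u • π (Pi.single u 1) := by
      conv_lhs => rw [hdec]
      rw [map_sum]
      simp
    have h3 : v s = r (fun _ => s (Fin.last k)) := by
      rw [hrdef]
      show v s = v (Fin.snoc (Fin.init s) (s (Fin.last k)))
      rw [Fin.snoc_init_self]
    rw [h3, ← hπid r hrT, h2]
    simp [Finset.sum_apply, hrdef]
  rw [key]
  refine Submodule.sum_mem _ fun u _ => Submodule.subset_span ?_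
  exact ⟨fun s' => v (Fin.snoc s' (u 0)), hc (u 0), π (Pi.single u 1), hπmem _, rfl⟩

/-- Build membership in `tensCons T S` from slice conditions. -/
lemma mem_tensCons {S : Submodule ℂ ((Fin k → Fin d) → ℂ)}
    {T : Submodule ℂ ((Fin 1 → Fin d) → ℂ)} {v : (Fin (k + 1) → Fin d) → ℂ}
    (hc : ∀ j, (fun s' => v (Fin.cons j s')) ∈ S)
    (hr : ∀ s', (fun u : Fin 1 → Fin d => v (Fin.cons (u 0) s')) ∈ T) :
    v ∈ tensCons T S := by
  obtain ⟨q, hq⟩ := Submodule.exists_isCompl T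
  set π : ((Fin 1 → Fin d) → ℂ) →ₗ[ℂ] ((Fin 1 → Fin d) → ℂ) :=
    T.subtype ∘ₗ (T.linearProjOfIsCompl q hq) with hπ
  have hπmem : ∀ x, π x ∈ T := fun x => (T.linearProjOfIsCompl q hq x).2
  have hπid : ∀ x ∈ T, π x = x := by
    intro x hx
    show T.subtype (T.projectionOnto q hq x) = x
    rw [show x = ((⟨x, hx⟩ : T) : (Fin 1 → Fin d) → ℂ) from rfl,
      Submodule.linearProjOfIsCompl_apply_left]
    rfl
  have key : v = ∑ u : Fin 1 → Fin d, fun s =>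
      π (Pi.single u 1) (fun _ => s 0) * v (Fin.cons (u 0) (fun t => s t.succ)) := by
    funext s
    rw [Finset.sum_apply]
    set r : (Fin 1 → Fin d) → ℂ :=
      fun u => v (Fin.cons (u 0) (fun t => s t.succ)) with hrdef
    have hrT : r ∈ T := hr _
    have hdec : r = ∑ u, r u • (Pi.single u 1 : (Fin 1 → Fin d) → ℂ) := by
      funext w
      simp [Finset.sum_apply, Pi.single_apply]
    have h2 : π r = ∑ u, r u • π (Pi.single u 1) := by
      conv_lhs => rw [hdec]
      rw [map_sum]
      simp
    have h3 : v s = r (fun _ => s 0) := by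
      rw [hrdef]
      show v s = v (Fin.cons (s 0) (Fin.tail s))
      rw [Fin.cons_self_tail]
    rw [h3, ← hπid r hrT, h2]
    simp [Finset.sum_apply, hrdef, mul_comm]
  rw [key]
  refine Submodule.sum_mem _ fun u _ => Submodule.subset_span ?_
  exact ⟨fun s' => v (Fin.cons (u 0) s'), hc (u 0), π (Pi.single u 1), hπmem _, rfl⟩

end MPSAux

open MPSAux in
/-- (S_k ⊗ S_1) ∩ (S_1 ⊗ S_k) = (S_k ⊗ H) ∩ (H ⊗ S_k) for k ≥ 2. -/
theorem inter_tens_S1_eq_inter_tens_top {d D : ℕ} (A : Fin d → Matrix (Fin D) (Fin D) ℂ)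
    (k : ℕ) (hk : 2 ≤ k) :
    tensSnoc (mpsSpace A k) (mpsSpace A 1) ⊓ tensCons (mpsSpace A 1) (mpsSpace A k) =
      tensSnoc (mpsSpace A k) ⊤ ⊓ tensCons ⊤ (mpsSpace A k) := by
  obtain ⟨m, rfl⟩ : ∃ m, k = m + 1 := ⟨k - 1, by omega⟩
  apply le_antisymm
  · refine inf_le_inf (Submodule.span_mono ?_) (Submodule.span_mono ?_)
    · rintro v ⟨f, hf, g, hg, rfl⟩; exact ⟨f, hf, g, trivial, rfl⟩
    · rintro v ⟨f, hf, g, hg, rfl⟩; exact ⟨f, hf, g, trivial, rfl⟩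
  · rintro v ⟨h1, h2⟩
    have hcol : ∀ i, (fun s' => v (Fin.snoc s' i)) ∈ mpsSpace A (m + 1) :=
      fun i => snoc_slice_mem h1 i
    have hrow : ∀ j, (fun s' => v (Fin.cons j s')) ∈ mpsSpace A (m + 1) :=
      fun j => cons_slice_mem h2 j
    constructor
    · refine mem_tensSnoc hcol ?_
      intro s'
      have h := lastRow_mem A (fun t : Fin m => s' t.succ) (hrow (s' 0))
      have heq : (fun u : Fin 1 → Fin d => v (Fin.snoc s' (u 0)))
          = lastRowL d m (fun t : Fin m => s' t.succ) (fun s'' => v (Fin.cons (s' 0) s'')) := by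
        funext u
        show v (Fin.snoc s' (u 0)) = v (Fin.cons (s' 0) (Fin.snoc (fun t => s' t.succ) (u 0)))
        rw [snoc_eq_cons]
      rw [heq]; exact h
    · refine mem_tensCons hrow ?_
      intro s'
      have h := firstRow_mem A (fun t : Fin m => s' t.castSucc) (hcol (s' (Fin.last m)))
      have heq : (fun u : Fin 1 → Fin d => v (Fin.cons (u 0) s'))
          = firstRowL d m (fun t : Fin m => s' t.castSucc)
              (fun s'' => v (Fin.snoc s'' (s' (Fin.last m)))) := by
        funext u
        show v (Fin.cons (u 0) s')
          = v (Fin.snoc (Fin.cons (u 0) fun t => s' t.castSucc) (s' (Fin.last m)))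
        rw [cons_eq_snoc]
      rw [heq]; exact h
end
end

section
/- A j-injective MPS tensor is left j-stable (and right j-stable). -/
open scoped BigOperators

noncomputable section

/-- The virtual MPS subspace V_j(A) ⊆ M_D. -/
def virtSpace {d D : ℕ} (A : Fin d → Matrix (Fin D) (Fin D) ℂ) (j : ℕ) :
    Submodule ℂ (Matrix (Fin D) (Fin D) ℂ) :=
  Submodule.span ℂ (Set.range fun s : Fin j → Fin d => prodA A s)

/-- A is left j-stable. -/
def LeftStable {d D : ℕ} (A : Fin d → Matrix (Fin D) (Fin D) ℂ) (j : ℕ) : Prop :=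
  ∃ Y : Fin d → Matrix (Fin D) (Fin D) ℂ,
    (∀ i, ∀ M ∈ virtSpace A (j + 1), Y i * M ∈ virtSpace A j) ∧
    ∀ M ∈ virtSpace A (j + 1), (∑ i, A i * Y i) * M = M

/-- A is right j-stable. -/
def RightStable {d D : ℕ} (A : Fin d → Matrix (Fin D) (Fin D) ℂ) (j : ℕ) : Prop :=
  ∃ Y : Fin d → Matrix (Fin D) (Fin D) ℂ,
    (∀ i, ∀ M ∈ virtSpace A (j + 1), M * Y i ∈ virtSpace A j) ∧
    ∀ M ∈ virtSpace A (j + 1), M * (∑ i, Y i * A i) = M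

lemma prodA_succ {d D k : ℕ} (A : Fin d → Matrix (Fin D) (Fin D) ℂ)
    (s : Fin (k + 1) → Fin d) :
    prodA A s = A (s 0) * prodA A (Fin.tail s) := by
  simp [prodA, List.ofFn_succ, Fin.tail]

lemma prodA_snoc {d D k : ℕ} (A : Fin d → Matrix (Fin D) (Fin D) ℂ)
    (s : Fin (k + 1) → Fin d) :
    prodA A s = prodA A (Fin.init s) * A (s (Fin.last k)) := by
  simp only [prodA, List.ofFn_succ', List.concat_eq_append, List.prod_append,
    List.prod_cons, List.prod_nil, mul_one, Fin.init]

/-- a j-injective MPS tensor is left j-stable (and right j-stable). -/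
theorem injective_implies_stable {d D : ℕ} (A : Fin d → Matrix (Fin D) (Fin D) ℂ) (j : ℕ)
    (hj : virtSpace A j = ⊤) : LeftStable A j ∧ RightStable A j := by
  -- condition (1) is trivial since virtSpace A j = ⊤; all we need are the Z identities
  suffices h : (∃ Y : Fin d → Matrix (Fin D) (Fin D) ℂ,
      ∀ M ∈ virtSpace A (j + 1), (∑ i, A i * Y i) * M = M) ∧
      (∃ Y : Fin d → Matrix (Fin D) (Fin D) ℂ,
      ∀ M ∈ virtSpace A (j + 1), M * (∑ i, Y i * A i) = M) by
    obtain ⟨⟨Y, hY⟩, ⟨Y', hY'⟩⟩ := h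
    exact ⟨⟨Y, fun i M _ => by rw [hj]; trivial, hY⟩,
           ⟨Y', fun i M _ => by rw [hj]; trivial, hY'⟩⟩
  cases j with
  | zero =>
    -- here every matrix is a scalar multiple of 1
    have key : ∀ X : Matrix (Fin D) (Fin D) ℂ, ∃ a : ℂ, X = a • 1 := by
      intro X
      have hX : X ∈ virtSpace A 0 := hj ▸ Submodule.mem_top
      have hr : (Set.range fun s : Fin 0 → Fin d => prodA A s) ⊆ {(1 : Matrix (Fin D) (Fin D) ℂ)} := by
        rintro _ ⟨s, rfl⟩
        simp [prodA]
      have := Submodule.span_mono (R := ℂ) hr hX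
      rw [Submodule.mem_span_singleton] at this
      obtain ⟨a, ha⟩ := this
      exact ⟨a, ha.symm⟩
    choose a ha using fun i => key (A i)
    by_cases hA : ∀ i, a i = 0
    · -- all A i = 0, so virtSpace A 1 = 0
      have hz : ∀ M ∈ virtSpace A 1, M = 0 := by
        intro M hM
        have hr : (Set.range fun s : Fin 1 → Fin d => prodA A s) ⊆ {(0 : Matrix (Fin D) (Fin D) ℂ)} := by
          rintro _ ⟨s, rfl⟩
          simp [prodA, ha (s 0), hA (s 0)]
        have := Submodule.span_mono (R := ℂ) hr hM
        simpa using this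
      exact ⟨⟨0, fun M hM => by rw [hz M hM]; simp⟩,
             ⟨0, fun M hM => by rw [hz M hM]; simp⟩⟩
    · push_neg at hA
      obtain ⟨i0, hi0⟩ := hA
      refine ⟨⟨fun i => if i = i0 then (a i0)⁻¹ • 1 else 0, fun M _ => ?_⟩,
              ⟨fun i => if i = i0 then (a i0)⁻¹ • 1 else 0, fun M _ => ?_⟩⟩
      · have : (∑ i, A i * (if i = i0 then (a i0)⁻¹ • (1 : Matrix (Fin D) (Fin D) ℂ) else 0)) = 1 := by
          rw [Finset.sum_eq_single i0]
          · rw [if_pos rfl, ha i0]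
            simp [smul_smul, mul_inv_cancel₀ hi0, inv_mul_cancel₀ hi0]
          · intro b _ hb; rw [if_neg hb, mul_zero]
          · intro hb; exact absurd (Finset.mem_univ i0) hb
        rw [this, one_mul]
      · have : (∑ i, (if i = i0 then (a i0)⁻¹ • (1 : Matrix (Fin D) (Fin D) ℂ) else 0) * A i) = 1 := by
          rw [Finset.sum_eq_single i0]
          · rw [if_pos rfl, ha i0]
            simp [smul_smul, mul_inv_cancel₀ hi0, inv_mul_cancel₀ hi0]
          · intro b _ hb; rw [if_neg hb, zero_mul]
          · intro hb; exact absurd (Finset.mem_univ i0) hb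
        rw [this, mul_one]
  | succ k =>
    have h1 : (1 : Matrix (Fin D) (Fin D) ℂ) ∈ virtSpace A (k + 1) := hj ▸ Submodule.mem_top
    rw [virtSpace, Submodule.mem_span_range_iff_exists_fun] at h1
    obtain ⟨c, hc⟩ := h1
    constructor
    · refine ⟨fun i => ∑ s : Fin (k + 1) → Fin d,
        if s 0 = i then c s • prodA A (Fin.tail s) else 0, fun M _ => ?_⟩
      have hZ : (∑ i, A i * ∑ s : Fin (k + 1) → Fin d,
          if s 0 = i then c s • prodA A (Fin.tail s) else 0) = 1 := by
        rw [← hc]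
        simp only [Finset.mul_sum, mul_ite, mul_zero]
        rw [Finset.sum_comm]
        refine Finset.sum_congr rfl fun s _ => ?_
        rw [Finset.sum_ite_eq (Finset.univ) (s 0) (fun i => A i * (c s • prodA A (Fin.tail s)))]
        simp [prodA_succ, mul_smul_comm]
      rw [hZ, one_mul]
    · refine ⟨fun i => ∑ s : Fin (k + 1) → Fin d,
        if s (Fin.last k) = i then c s • prodA A (Fin.init s) else 0, fun M _ => ?_⟩
      have hZ : (∑ i, (∑ s : Fin (k + 1) → Fin d,
          if s (Fin.last k) = i then c s • prodA A (Fin.init s) else 0) * A i) = 1 := by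
        rw [← hc]
        simp only [Finset.sum_mul, ite_mul, zero_mul]
        rw [Finset.sum_comm]
        refine Finset.sum_congr rfl fun s _ => ?_
        rw [Finset.sum_ite_eq (Finset.univ) (s (Fin.last k)) (fun i => (c s • prodA A (Fin.init s)) * A i)]
        simp [prodA_snoc, smul_mul_assoc]
      rw [hZ, mul_one]
end
end

section
/- If an MPS tensor A is left j-stable, then it is left k-stable for all k ≥ j (and analogously for right stability). -/
open scoped BigOperators

noncomputable section

lemma prodA_split {d D : ℕ} (A : Fin d → Matrix (Fin D) (Fin D) ℂ) (a b : ℕ)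
    (s : Fin (a + b) → Fin d) :
    prodA A s = prodA A (fun i : Fin a => s (Fin.castAdd b i)) *
      prodA A (fun i : Fin b => s (Fin.natAdd a i)) := by
  simp [prodA, List.ofFn_add (f := fun t => A (s t)), List.prod_append]; rfl

lemma prodA_append_mem {d D : ℕ} (A : Fin d → Matrix (Fin D) (Fin D) ℂ) {a b : ℕ}
    (s1 : Fin a → Fin d) (s2 : Fin b → Fin d) :
    prodA A s1 * prodA A s2 ∈ virtSpace A (a + b) := by
  have : prodA A s1 * prodA A s2 = prodA A (Fin.append s1 s2) := by
    simp [prodA, List.ofFn_add (f := fun t => A (Fin.append s1 s2 t)), Fin.append_left,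
      Fin.append_right]
  rw [this]
  exact Submodule.subset_span ⟨_, rfl⟩

lemma mul_mem_virt {d D : ℕ} (A : Fin d → Matrix (Fin D) (Fin D) ℂ) {a b : ℕ}
    {M N : Matrix (Fin D) (Fin D) ℂ} (hM : M ∈ virtSpace A a) (hN : N ∈ virtSpace A b) :
    M * N ∈ virtSpace A (a + b) := by
  induction hM using Submodule.span_induction with
  | mem x hx =>
    obtain ⟨s1, rfl⟩ := hx
    induction hN using Submodule.span_induction with
    | mem y hy => obtain ⟨s2, rfl⟩ := hy; exact prodA_append_mem A s1 s2
    | zero => simp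
    | add x y _ _ hx hy => rw [mul_add]; exact add_mem hx hy
    | smul c x _ hx => rw [mul_smul_comm]; exact Submodule.smul_mem _ _ hx
  | zero => simp
  | add x y _ _ hx hy => rw [add_mul]; exact add_mem hx hy
  | smul c x _ hx => rw [smul_mul_assoc]; exact Submodule.smul_mem _ _ hx

/-- left (right) j-stability implies left (right) k-stability for all k ≥ j. -/
theorem stable_mono {d D : ℕ} (A : Fin d → Matrix (Fin D) (Fin D) ℂ) (j : ℕ) :
    (LeftStable A j → ∀ k, j ≤ k → LeftStable A k) ∧
    (RightStable A j → ∀ k, j ≤ k → RightStable A k) := by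
  constructor
  · rintro ⟨Y, hY1, hY2⟩ k hjk
    obtain ⟨m, rfl⟩ := Nat.exists_eq_add_of_le hjk
    refine ⟨Y, ?_, ?_⟩
    · intro i M hM
      rw [show j + m + 1 = (j + 1) + m by omega] at hM
      induction hM using Submodule.span_induction with
      | mem x hx =>
        obtain ⟨s, rfl⟩ := hx
        dsimp only
        rw [prodA_split A (j+1) m s, ← mul_assoc]
        refine mul_mem_virt A ?_ (Submodule.subset_span ⟨_, rfl⟩)
        exact hY1 i _ (Submodule.subset_span ⟨_, rfl⟩)
      | zero => simp
      | add x y _ _ hx hy => rw [mul_add]; exact add_mem hx hy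
      | smul c x _ hx => rw [mul_smul_comm]; exact Submodule.smul_mem _ _ hx
    · intro M hM
      rw [show j + m + 1 = (j + 1) + m by omega] at hM
      induction hM using Submodule.span_induction with
      | mem x hx =>
        obtain ⟨s, rfl⟩ := hx
        dsimp only
        rw [prodA_split A (j+1) m s, ← mul_assoc,
          hY2 _ (Submodule.subset_span ⟨_, rfl⟩)]
      | zero => simp
      | add x y _ _ hx hy => rw [mul_add, hx, hy]
      | smul c x _ hx => rw [mul_smul_comm, hx]
  · rintro ⟨Y, hY1, hY2⟩ k hjk
    obtain ⟨m, rfl⟩ := Nat.exists_eq_add_of_le hjk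
    refine ⟨Y, ?_, ?_⟩
    · intro i M hM
      rw [show j + m + 1 = m + (j + 1) by omega] at hM
      rw [show j + m = m + j by omega]
      induction hM using Submodule.span_induction with
      | mem x hx =>
        obtain ⟨s, rfl⟩ := hx
        dsimp only
        rw [prodA_split A m (j+1) s, mul_assoc]
        refine mul_mem_virt A (Submodule.subset_span ⟨_, rfl⟩) ?_
        exact hY1 i _ (Submodule.subset_span ⟨_, rfl⟩)
      | zero => simp
      | add x y _ _ hx hy => rw [add_mul]; exact add_mem hx hy
      | smul c x _ hx => rw [smul_mul_assoc]; exact Submodule.smul_mem _ _ hx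
    · intro M hM
      rw [show j + m + 1 = m + (j + 1) by omega] at hM
      induction hM using Submodule.span_induction with
      | mem x hx =>
        obtain ⟨s, rfl⟩ := hx
        dsimp only
        rw [prodA_split A m (j+1) s, mul_assoc,
          hY2 _ (Submodule.subset_span ⟨_, rfl⟩)]
      | zero => simp
      | add x y _ _ hx hy => rw [add_mul, hx, hy]
      | smul c x _ hx => rw [smul_mul_assoc, hx]
end
end

section
/- If an MPS tensor A is left j-stable with matrices Y_i, then the operator O on H^{⊗(j+1)} with matrix coefficients defined by Y_i A_{i_0}⋯A_{i_j} = Σ O(i)^{i_1'…i_j'}_{i_0…i_j} A_{i_1'}⋯A_{i_j'} satisfies: for every M ∈ M_D, O applied to the tensor A M [A]^j equals N [A]^{j+1} with N = Σ_i A_i M Y_i; in particular O fixes every state |X[A]^{j+1}⟩ ∈ S_{j+1}(A). -/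
open scoped BigOperators

noncomputable section

/-- given a left j-stable tensor with stability matrices `Y` and coefficients `c`
witnessing `Y i * A_{s₀}⋯A_{s_j} = ∑_t c i s t • A_{t₁}⋯A_{t_j}`, the operator
`O : v ↦ fun s => ∑ i t, c i s t * v (Fin.cons i t)` pushes boundary matrices to the left:
`O` applied to the matrix-valued tensor `A M [A]^j` gives `N [A]^{j+1}` with
`N = ∑ i, A i * M * Y i`, and in particular `O` fixes every MPS state `|X[A]^{j+1}⟩`. -/
theorem stable_pushing_operator {d D j : ℕ} (A : Fin d → Matrix (Fin D) (Fin D) ℂ)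
    (Y : Fin d → Matrix (Fin D) (Fin D) ℂ)
    (hY1 : ∀ i, ∀ M ∈ virtSpace A (j + 1), Y i * M ∈ virtSpace A j)
    (hY2 : ∀ M ∈ virtSpace A (j + 1), (∑ i, A i * Y i) * M = M)
    (c : Fin d → (Fin (j + 1) → Fin d) → (Fin j → Fin d) → ℂ)
    (hc : ∀ i (s : Fin (j + 1) → Fin d),
      Y i * prodA A s = ∑ t : Fin j → Fin d, c i s t • prodA A t) :
    (∀ M : Matrix (Fin D) (Fin D) ℂ, ∀ s : Fin (j + 1) → Fin d,
      (∑ i : Fin d, ∑ t : Fin j → Fin d, c i s t • (A i * M * prodA A t)) =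
        (∑ i : Fin d, A i * M * Y i) * prodA A s) ∧
    (∀ X : Matrix (Fin D) (Fin D) ℂ, ∀ s : Fin (j + 1) → Fin d,
      (∑ i : Fin d, ∑ t : Fin j → Fin d, c i s t * mpsVec A X (j + 1) (Fin.cons i t)) =
        mpsVec A X (j + 1) s) := by
  have hpart1 : ∀ M : Matrix (Fin D) (Fin D) ℂ, ∀ s : Fin (j + 1) → Fin d,
      (∑ i : Fin d, ∑ t : Fin j → Fin d, c i s t • (A i * M * prodA A t)) =
        (∑ i : Fin d, A i * M * Y i) * prodA A s := by
    intro M s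
    have h1 : ∀ i : Fin d, (∑ t : Fin j → Fin d, c i s t • (A i * M * prodA A t)) =
        A i * M * Y i * prodA A s := by
      intro i
      rw [mul_assoc (A i * M), hc]
      simp [Finset.mul_sum, Matrix.mul_smul]
    simp only [h1, Finset.sum_mul]
  refine ⟨hpart1, ?_⟩
  intro X s
  have hmem : prodA A s ∈ virtSpace A (j + 1) := Submodule.subset_span ⟨s, rfl⟩
  have key : (∑ i : Fin d, ∑ t : Fin j → Fin d, c i s t • (A i * prodA A t)) = prodA A s := by
    have h := hpart1 1 s
    simpa [hY2 _ hmem] using h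
  have hcons : ∀ (i : Fin d) (t : Fin j → Fin d),
      prodA A (Fin.cons i t) = A i * prodA A t := by
    intro i t
    simp [prodA, List.ofFn_succ]
  calc (∑ i : Fin d, ∑ t : Fin j → Fin d, c i s t * mpsVec A X (j + 1) (Fin.cons i t))
      = (X * ∑ i : Fin d, ∑ t : Fin j → Fin d, c i s t • (A i * prodA A t)).trace := by
        simp [mpsVec, hcons, Finset.mul_sum, Matrix.mul_smul, Matrix.trace_sum, mul_comm]
    _ = mpsVec A X (j + 1) s := by rw [key]; rfl
end
end

section
/- For the W-state MPS tensor and k ≥ 2, the intersection property holds: (S_k ⊗ ℂ²) ∩ (ℂ² ⊗ S_k) = S_{k+1}, where S_k = Span{ |0⟩^{⊗k}, |W_k⟩ }. -/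
open scoped BigOperators

noncomputable section

/-- The computational basis state |s⟩, as a coefficient vector. -/
def basisState {d k : ℕ} (s : Fin k → Fin d) : (Fin k → Fin d) → ℂ :=
  fun t => if t = s then 1 else 0

/-- The W state on k sites. -/
def Wstate (k : ℕ) : (Fin k → Fin 2) → ℂ :=
  ∑ j : Fin k, basisState (fun t => if t = j then 1 else 0)

/-- S_k = Span{|0…0⟩, |W_k⟩} for the W-state tensor. -/
def wSpace (k : ℕ) : Submodule ℂ ((Fin k → Fin 2) → ℂ) :=
  Submodule.span ℂ {basisState (fun _ : Fin k => 0), Wstate k}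

namespace WAux

def oh {k : ℕ} (j : Fin k) : Fin k → Fin 2 := fun t => if t = j then 1 else 0

lemma W_apply (k : ℕ) (f : Fin k → Fin 2) :
    Wstate k f = ∑ j : Fin k, if f = oh j then (1:ℂ) else 0 := by
  simp only [Wstate, Finset.sum_apply, basisState]
  rfl

lemma zero_ne_oh {k : ℕ} (j : Fin k) : (fun _ : Fin k => (0:Fin 2)) ≠ oh j := by
  intro h
  have := congrFun h j
  simp [oh] at this

lemma W_zero (k : ℕ) : Wstate k (fun _ => 0) = 0 := by
  rw [W_apply]
  exact Finset.sum_eq_zero fun j _ => if_neg (zero_ne_oh j)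

lemma W_oh {k : ℕ} (j : Fin k) : Wstate k (oh j) = 1 := by
  rw [W_apply, Finset.sum_eq_single j]
  · simp
  · intro i _ hij
    rw [if_neg]
    intro h
    have := congrFun h i
    simp [oh] at this
    exact hij this
  · simp

lemma W_two {k : ℕ} {f : Fin k → Fin 2} {i j : Fin k} (hij : i ≠ j)
    (hi : f i = 1) (hj : f j = 1) : Wstate k f = 0 := by
  rw [W_apply]
  refine Finset.sum_eq_zero fun l _ => if_neg fun h => ?_
  by_cases hil : i = l
  · subst hil
    have := congrFun h j
    rw [hj, oh, if_neg (Ne.symm hij)] at this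
    exact absurd this (by decide)
  · have := congrFun h i
    rw [hi, oh, if_neg hil] at this
    exact absurd this (by decide)

end WAux

namespace WAux

lemma fin2 (x : Fin 2) : x = 0 ∨ x = 1 := by omega

lemma snoc_eq_iff {k : ℕ} {f g : Fin k → Fin 2} {x y : Fin 2} :
    (Fin.snoc f x : Fin (k+1) → Fin 2) = Fin.snoc g y ↔ f = g ∧ x = y := by
  constructor
  · intro h
    refine ⟨funext fun t => ?_, ?_⟩
    · have := congrFun h (Fin.castSucc t); simpa using this
    · have := congrFun h (Fin.last k); simpa using this
  · rintro ⟨rfl, rfl⟩; rfl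

lemma cons_eq_iff {k : ℕ} {f g : Fin k → Fin 2} {x y : Fin 2} :
    (Fin.cons x f : Fin (k+1) → Fin 2) = Fin.cons y g ↔ x = y ∧ f = g := by
  rw [Fin.cons_inj]

lemma oh_castSucc {k : ℕ} (i : Fin k) :
    oh (Fin.castSucc i) = Fin.snoc (oh i) 0 := by
  funext t
  refine Fin.lastCases ?_ (fun t => ?_) t
  · simp [oh, (Fin.castSucc_lt_last i).ne']
  · simp [oh, Fin.snoc_castSucc]

lemma oh_last (k : ℕ) : oh (Fin.last k) = Fin.snoc (fun _ => 0) 1 := by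
  funext t
  refine Fin.lastCases ?_ (fun t => ?_) t
  · simp [oh]
  · simp [oh, (Fin.castSucc_lt_last t).ne]

lemma zero_snoc (k : ℕ) :
    (fun _ : Fin (k+1) => (0:Fin 2)) = Fin.snoc (fun _ => 0) 0 := by
  funext t
  refine Fin.lastCases ?_ (fun t => ?_) t <;> simp

lemma oh_succ {k : ℕ} (i : Fin k) : oh (Fin.succ i) = Fin.cons 0 (oh i) := by
  funext t
  refine Fin.cases ?_ (fun t => ?_) t
  · simp [oh, (Fin.succ_ne_zero i).symm]
  · simp [oh, Fin.succ_inj]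

lemma oh_zero (k : ℕ) : oh (0 : Fin (k+1)) = Fin.cons 1 (fun _ => 0) := by
  funext t
  refine Fin.cases ?_ (fun t => ?_) t
  · simp [oh]
  · simp [oh, Fin.succ_ne_zero]

lemma zero_cons (k : ℕ) :
    (fun _ : Fin (k+1) => (0:Fin 2)) = Fin.cons 0 (fun _ => 0) := by
  funext t
  refine Fin.cases ?_ (fun t => ?_) t <;> simp

lemma Z_snoc {k : ℕ} (f : Fin k → Fin 2) (x : Fin 2) :
    basisState (fun _ : Fin (k+1) => 0) (Fin.snoc f x)
      = (if x = 0 then 1 else 0) * (if f = (fun _ => 0) then (1:ℂ) else 0) := by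
  simp only [basisState, zero_snoc, snoc_eq_iff]
  by_cases hx : x = 0 <;> by_cases hf : f = (fun _ => 0) <;> simp [hx, hf]

lemma Z_cons {k : ℕ} (x : Fin 2) (f : Fin k → Fin 2) :
    basisState (fun _ : Fin (k+1) => 0) (Fin.cons x f)
      = (if x = 0 then 1 else 0) * (if f = (fun _ => 0) then (1:ℂ) else 0) := by
  simp only [basisState, zero_cons, cons_eq_iff]
  by_cases hx : x = 0 <;> by_cases hf : f = (fun _ => 0) <;> simp [hx, hf]

lemma W_snoc {k : ℕ} (f : Fin k → Fin 2) (x : Fin 2) :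
    Wstate (k+1) (Fin.snoc f x)
      = (if x = 0 then 1 else 0) * Wstate k f
        + (if x = 1 then 1 else 0) * (if f = (fun _ => 0) then (1:ℂ) else 0) := by
  rw [W_apply, Fin.sum_univ_castSucc]
  have h1 : ∀ i : Fin k,
      (if (Fin.snoc f x : Fin (k+1) → Fin 2) = oh (Fin.castSucc i) then (1:ℂ) else 0)
        = (if x = 0 then 1 else 0) * (if f = oh i then 1 else 0) := by
    intro i
    simp only [oh_castSucc, snoc_eq_iff]
    by_cases hx : x = 0 <;> by_cases hf : f = oh i <;> simp [hx, hf]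
  simp only [h1, oh_last, snoc_eq_iff]
  rw [← Finset.mul_sum, ← W_apply]
  by_cases hx : x = 1 <;> by_cases hf : f = (fun _ => 0) <;> simp [hx, hf]

lemma W_cons {k : ℕ} (x : Fin 2) (f : Fin k → Fin 2) :
    Wstate (k+1) (Fin.cons x f)
      = (if x = 0 then 1 else 0) * Wstate k f
        + (if x = 1 then 1 else 0) * (if f = (fun _ => 0) then (1:ℂ) else 0) := by
  rw [W_apply, Fin.sum_univ_succ]
  have h1 : ∀ i : Fin k,
      (if (Fin.cons x f : Fin (k+1) → Fin 2) = oh (Fin.succ i) then (1:ℂ) else 0)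
        = (if x = 0 then 1 else 0) * (if f = oh i then 1 else 0) := by
    intro i
    simp only [oh_succ, cons_eq_iff]
    by_cases hx : x = 0 <;> by_cases hf : f = oh i <;> simp [hx, hf]
  simp only [h1, oh_zero, cons_eq_iff]
  rw [← Finset.mul_sum, ← W_apply]
  by_cases hx : x = 1 <;> by_cases hf : f = (fun _ => 0) <;> simp [hx, hf]

end WAux

namespace WAux

lemma snoc_char {k : ℕ} {v : (Fin (k+1) → Fin 2) → ℂ}
    (hv : v ∈ tensSnoc (wSpace k) ⊤) :
    ∃ a b : Fin 2 → ℂ, ∀ (f : Fin k → Fin 2) (x : Fin 2),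
      v (Fin.snoc f x) = (if f = (fun _ => 0) then 1 else 0) * a x + Wstate k f * b x := by
  induction hv using Submodule.span_induction with
  | mem w hw =>
      obtain ⟨f, hf, g, -, rfl⟩ := hw
      obtain ⟨α, β, hαβ⟩ := Submodule.mem_span_pair.mp hf
      refine ⟨fun x => α * g (fun _ => x), fun x => β * g (fun _ => x), fun f' x => ?_⟩
      have h1 : (fun t => (Fin.snoc f' x : Fin (k+1) → Fin 2) (Fin.castSucc t)) = f' := by
        funext t; simp
      have h2 : (Fin.snoc f' x : Fin (k+1) → Fin 2) (Fin.last k) = x := by simp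
      simp only [h1, h2, ← hαβ, Pi.add_apply, Pi.smul_apply, smul_eq_mul, basisState]
      ring
  | zero => exact ⟨0, 0, by simp⟩
  | add w₁ w₂ h₁ h₂ ih₁ ih₂ =>
      obtain ⟨a₁, b₁, H₁⟩ := ih₁
      obtain ⟨a₂, b₂, H₂⟩ := ih₂
      exact ⟨a₁ + a₂, b₁ + b₂, fun f x => by simp only [Pi.add_apply, H₁, H₂]; ring⟩
  | smul c w hw ih =>
      obtain ⟨a, b, H⟩ := ih
      exact ⟨c • a, c • b, fun f x => by simp only [Pi.smul_apply, H, smul_eq_mul]; ring⟩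

lemma cons_char {k : ℕ} {v : (Fin (k+1) → Fin 2) → ℂ}
    (hv : v ∈ tensCons ⊤ (wSpace k)) :
    ∃ c d : Fin 2 → ℂ, ∀ (x : Fin 2) (f : Fin k → Fin 2),
      v (Fin.cons x f) = c x * (if f = (fun _ => 0) then 1 else 0) + d x * Wstate k f := by
  induction hv using Submodule.span_induction with
  | mem w hw =>
      obtain ⟨f, hf, g, -, rfl⟩ := hw
      obtain ⟨α, β, hαβ⟩ := Submodule.mem_span_pair.mp hf
      refine ⟨fun x => g (fun _ => x) * α, fun x => g (fun _ => x) * β, fun x f' => ?_⟩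
      have h1 : (fun t : Fin k => (Fin.cons x f' : Fin (k+1) → Fin 2) t.succ) = f' := by
        funext t; simp
      have h2 : (Fin.cons x f' : Fin (k+1) → Fin 2) 0 = x := by simp
      simp only [h1, h2, ← hαβ, Pi.add_apply, Pi.smul_apply, smul_eq_mul, basisState]
      ring
  | zero => exact ⟨0, 0, by simp⟩
  | add w₁ w₂ h₁ h₂ ih₁ ih₂ =>
      obtain ⟨a₁, b₁, H₁⟩ := ih₁
      obtain ⟨a₂, b₂, H₂⟩ := ih₂
      exact ⟨a₁ + a₂, b₁ + b₂, fun x f => by simp only [Pi.add_apply, H₁, H₂]; ring⟩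
  | smul c w hw ih =>
      obtain ⟨a, b, H⟩ := ih
      exact ⟨c • a, c • b, fun x f => by simp only [Pi.smul_apply, H, smul_eq_mul]; ring⟩

end WAux

namespace WAux

lemma Z_mem_wSpace (k : ℕ) : basisState (fun _ : Fin k => 0) ∈ wSpace k :=
  Submodule.subset_span (Set.mem_insert _ _)

lemma W_mem_wSpace (k : ℕ) : Wstate k ∈ wSpace k :=
  Submodule.subset_span (Set.mem_insert_of_mem _ rfl)

lemma front_snoc {k : ℕ} (f : Fin k → Fin 2) (x : Fin 2) :
    (fun t => (Fin.snoc f x : Fin (k+1) → Fin 2) (Fin.castSucc t)) = f := by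
  funext t; simp

lemma tail_cons {k : ℕ} (x : Fin 2) (f : Fin k → Fin 2) :
    (fun t : Fin k => (Fin.cons x f : Fin (k+1) → Fin 2) t.succ) = f := by
  funext t; simp

lemma Zk1_mem_snoc (k : ℕ) :
    basisState (fun _ : Fin (k+1) => 0) ∈ tensSnoc (wSpace k) ⊤ := by
  apply Submodule.subset_span
  refine ⟨basisState (fun _ => 0), Z_mem_wSpace k,
    (fun u => if u 0 = 0 then 1 else 0), Submodule.mem_top, ?_⟩
  funext s
  induction s using Fin.snocCases with
  | snoc f x =>
    rw [Z_snoc]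
    simp only [front_snoc, Fin.snoc_last, basisState]
    ring

lemma Wk1_mem_snoc (k : ℕ) : Wstate (k+1) ∈ tensSnoc (wSpace k) ⊤ := by
  have hW : Wstate (k+1) =
      (fun s => Wstate k (fun t => s (Fin.castSucc t)) * (if s (Fin.last k) = 0 then (1:ℂ) else 0))
      + (fun s => basisState (fun _ => 0) (fun t => s (Fin.castSucc t))
          * (if s (Fin.last k) = 1 then (1:ℂ) else 0)) := by
    funext s
    induction s using Fin.snocCases with
    | snoc f x =>
      rw [Pi.add_apply, W_snoc]
      simp only [front_snoc, Fin.snoc_last, basisState]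
      ring
  rw [hW]
  exact add_mem
    (Submodule.subset_span ⟨Wstate k, W_mem_wSpace k,
      (fun u => if u 0 = 0 then 1 else 0), Submodule.mem_top, rfl⟩)
    (Submodule.subset_span ⟨basisState (fun _ => 0), Z_mem_wSpace k,
      (fun u => if u 0 = 1 then 1 else 0), Submodule.mem_top, rfl⟩)

lemma Zk1_mem_cons (k : ℕ) :
    basisState (fun _ : Fin (k+1) => 0) ∈ tensCons ⊤ (wSpace k) := by
  apply Submodule.subset_span
  refine ⟨basisState (fun _ => 0), Z_mem_wSpace k,
    (fun u => if u 0 = 0 then 1 else 0), Submodule.mem_top, ?_⟩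
  funext s
  induction s using Fin.consCases with
  | cons x f =>
    rw [Z_cons]
    simp only [tail_cons, Fin.cons_zero, basisState]

lemma Wk1_mem_cons (k : ℕ) : Wstate (k+1) ∈ tensCons ⊤ (wSpace k) := by
  have hW : Wstate (k+1) =
      (fun s => (if s 0 = 0 then (1:ℂ) else 0) * Wstate k (fun t : Fin k => s t.succ))
      + (fun s => (if s 0 = 1 then (1:ℂ) else 0)
          * basisState (fun _ => 0) (fun t : Fin k => s t.succ)) := by
    funext s
    induction s using Fin.consCases with
    | cons x f =>
      rw [Pi.add_apply, W_cons]
      simp only [tail_cons, Fin.cons_zero, basisState]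
  rw [hW]
  exact add_mem
    (Submodule.subset_span ⟨Wstate k, W_mem_wSpace k,
      (fun u => if u 0 = 0 then 1 else 0), Submodule.mem_top, rfl⟩)
    (Submodule.subset_span ⟨basisState (fun _ => 0), Z_mem_wSpace k,
      (fun u => if u 0 = 1 then 1 else 0), Submodule.mem_top, rfl⟩)

end WAux

/-- for the W state, (S_k ⊗ ℂ²) ∩ (ℂ² ⊗ S_k) = S_{k+1} for k ≥ 2. -/
theorem wState_intersection (k : ℕ) (hk : 2 ≤ k) :
    tensSnoc (wSpace k) ⊤ ⊓ tensCons ⊤ (wSpace k) = wSpace (k + 1) := by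
  apply le_antisymm
  · rintro v hv
    rw [Submodule.mem_inf] at hv
    obtain ⟨h1, h2⟩ := hv
    obtain ⟨a, b, Hab⟩ := WAux.snoc_char h1
    obtain ⟨c, d, Hcd⟩ := WAux.cons_char h2
    have Hab' : ∀ s : Fin (k+1) → Fin 2,
        v s = (if Fin.init s = (fun _ => 0) then 1 else 0) * a (s (Fin.last k))
          + Wstate k (Fin.init s) * b (s (Fin.last k)) := by
      intro s
      have := Hab (Fin.init s) (s (Fin.last k))
      rwa [Fin.snoc_init_self] at this
    have Hcd' : ∀ s : Fin (k+1) → Fin 2,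
        v s = c (s 0) * (if Fin.tail s = (fun _ => 0) then 1 else 0)
          + d (s 0) * Wstate k (Fin.tail s) := by
      intro s
      have := Hcd (s 0) (Fin.tail s)
      rwa [Fin.cons_self_tail] at this
    -- index abbreviations
    have hk1 : 1 < k + 1 := by omega
    set i1 : Fin (k+1) := ⟨1, hk1⟩ with hi1
    set j0 : Fin k := ⟨0, by omega⟩ with hj0
    set j1 : Fin k := ⟨1, by omega⟩ with hj1
    set jm : Fin k := ⟨k-1, by omega⟩ with hjm
    -- string s1 = 0...01
    set s1 : Fin (k+1) → Fin 2 := WAux.oh (Fin.last k) with hs1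
    have A : Fin.init s1 = (fun _ => 0) := by
      funext t
      simp only [Fin.init, hs1, WAux.oh]
      rw [if_neg]
      rw [Fin.ext_iff]
      have := t.isLt
      simp
      omega
    have B : s1 (Fin.last k) = 1 := by simp [hs1, WAux.oh]
    have C : s1 0 = 0 := by
      simp only [hs1, WAux.oh]
      rw [if_neg]
      rw [Fin.ext_iff]
      simp
      omega
    have D : Fin.tail s1 = WAux.oh jm := by
      funext t
      simp only [Fin.tail, hs1, WAux.oh]
      refine if_congr ?_ rfl rfl
      rw [Fin.ext_iff, Fin.ext_iff]
      have := t.isLt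
      simp [hjm]
      omega
    have E1 : v s1 = a 1 := by
      rw [Hab' s1, A, B, if_pos rfl, WAux.W_zero]
      ring
    have E1' : v s1 = d 0 := by
      rw [Hcd' s1, C, D, if_neg (Ne.symm (WAux.zero_ne_oh jm)), WAux.W_oh]
      ring
    -- string s2 = 010...0
    set s2 : Fin (k+1) → Fin 2 := WAux.oh i1 with hs2
    have A2 : Fin.init s2 = WAux.oh j1 := by
      funext t
      simp only [Fin.init, hs2, WAux.oh]
      refine if_congr ?_ rfl rfl
      rw [Fin.ext_iff, Fin.ext_iff]
      simp [hi1, hj1]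
    have B2 : s2 (Fin.last k) = 0 := by
      simp only [hs2, WAux.oh]
      rw [if_neg]
      rw [Fin.ext_iff]
      simp [hi1]
      omega
    have C2 : s2 0 = 0 := by
      simp only [hs2, WAux.oh]
      rw [if_neg]
      rw [Fin.ext_iff]
      simp [hi1]
    have D2 : Fin.tail s2 = WAux.oh j0 := by
      funext t
      simp only [Fin.tail, hs2, WAux.oh]
      refine if_congr ?_ rfl rfl
      rw [Fin.ext_iff, Fin.ext_iff]
      simp [hi1, hj0]
    have E2 : v s2 = b 0 := by
      rw [Hab' s2, A2, B2, if_neg (Ne.symm (WAux.zero_ne_oh j1)), WAux.W_oh]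
      ring
    have E2' : v s2 = d 0 := by
      rw [Hcd' s2, C2, D2, if_neg (Ne.symm (WAux.zero_ne_oh j0)), WAux.W_oh]
      ring
    -- string s3 = 010...01
    set s3 : Fin (k+1) → Fin 2 := (fun t => if t = i1 ∨ t = Fin.last k then 1 else 0) with hs3
    have A3 : Fin.init s3 = WAux.oh j1 := by
      funext t
      simp only [Fin.init, hs3, WAux.oh]
      refine if_congr ?_ rfl rfl
      rw [Fin.ext_iff, Fin.ext_iff, Fin.ext_iff]
      have := t.isLt
      simp [hi1, hj1]
      omega
    have B3 : s3 (Fin.last k) = 1 := by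
      simp [hs3]
    have C3 : s3 0 = 0 := by
      simp only [hs3]
      rw [if_neg]
      rw [Fin.ext_iff, Fin.ext_iff]
      simp [hi1]
      omega
    set g3 : Fin k → Fin 2 := (fun t => if t = j0 ∨ t = jm then 1 else 0) with hg3
    have D3 : Fin.tail s3 = g3 := by
      funext t
      simp only [Fin.tail, hs3, hg3]
      refine if_congr ?_ rfl rfl
      rw [Fin.ext_iff, Fin.ext_iff, Fin.ext_iff, Fin.ext_iff]
      have := t.isLt
      simp [hi1, hj0, hjm]
      omega
    have hg3ne : g3 ≠ (fun _ => 0) := by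
      intro h
      have := congrFun h j0
      simp [hg3] at this
    have hWg3 : Wstate k g3 = 0 := by
      refine WAux.W_two (i := j0) (j := jm) ?_ ?_ ?_
      · rw [Ne, Fin.ext_iff]
        simp [hj0, hjm]
        omega
      · simp [hg3]
      · simp [hg3]
    have E3 : v s3 = b 1 := by
      rw [Hab' s3, A3, B3, if_neg (Ne.symm (WAux.zero_ne_oh j1)), WAux.W_oh]
      ring
    have E3' : v s3 = 0 := by
      rw [Hcd' s3, C3, D3, if_neg hg3ne, hWg3]
      ring
    -- the relations
    have ha1 : a 1 = b 0 := by rw [← E1, E1', ← E2', E2]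
    have hb1 : b 1 = 0 := by rw [← E3, E3']
    -- conclude
    rw [wSpace]
    apply Submodule.mem_span_pair.mpr
    refine ⟨a 0, b 0, ?_⟩
    funext s
    induction s using Fin.snocCases with
    | snoc f x =>
      rw [Pi.add_apply, Pi.smul_apply, Pi.smul_apply, smul_eq_mul, smul_eq_mul,
        WAux.Z_snoc, WAux.W_snoc, Hab]
      rcases WAux.fin2 x with rfl | rfl
      · rw [if_pos rfl, if_neg (by decide : (0:Fin 2) ≠ 1)]
        ring
      · rw [if_neg (by decide : (1:Fin 2) ≠ 0), if_pos rfl, ha1, hb1]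
        ring
  · rw [wSpace, Submodule.span_le]
    intro w hw
    simp only [Set.mem_insert_iff, Set.mem_singleton_iff] at hw
    rcases hw with rfl | rfl
    · exact Submodule.mem_inf.mpr ⟨WAux.Zk1_mem_snoc k, WAux.Zk1_mem_cons k⟩
    · exact Submodule.mem_inf.mpr ⟨WAux.Wk1_mem_snoc k, WAux.Wk1_mem_cons k⟩
end
end

section
/- The Dicke MPS tensor with A_0 = 1_D and A_1 = Σ_{i=0}^{D−2} |i⟩⟨i+1| is left (D−1)-stable, with witness Y_0 = 1_D and Y_1 = A_1^{D−1}. -/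
open scoped BigOperators

noncomputable section

/-- The nilpotent shift matrix ∑_{i=0}^{D-2} |i⟩⟨i+1|. -/
def shiftMat (D : ℕ) : Matrix (Fin D) (Fin D) ℂ :=
  Matrix.of fun i j => if (i : ℕ) + 1 = (j : ℕ) then 1 else 0


lemma shiftMat_apply (D : ℕ) (i j : Fin D) :
    shiftMat D i j = if (i : ℕ) + 1 = (j : ℕ) then 1 else 0 := rfl

lemma shift_pow_apply (D k : ℕ) (i j : Fin D) :
    (shiftMat D ^ k) i j = if (i : ℕ) + k = (j : ℕ) then 1 else 0 := by
  induction k generalizing i with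
  | zero => simp [Matrix.one_apply, Fin.ext_iff]
  | succ k ih =>
    rw [pow_succ', Matrix.mul_apply]
    simp only [shiftMat_apply, ite_mul, one_mul, zero_mul]
    by_cases h : (i : ℕ) + 1 < D
    · rw [Finset.sum_eq_single (⟨(i : ℕ) + 1, h⟩ : Fin D)]
      · rw [if_pos rfl, ih]
        congr 1
        simp only [eq_iff_iff]
        constructor <;> intro <;> omega
      · intro b _ hb
        rw [if_neg]
        intro hc
        exact hb (by simpa [Fin.ext_iff] using hc.symm)
      · simp
    · rw [Finset.sum_eq_zero, if_neg]
      · have := j.isLt; omega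
      · intro b _
        rw [if_neg]
        have := b.isLt; omega

lemma shift_pow_eq_zero (D a : ℕ) (ha : D ≤ a) : shiftMat D ^ a = 0 := by
  ext i j
  rw [shift_pow_apply, if_neg, Matrix.zero_apply]
  have := j.isLt; omega

lemma prodA_eq_pow (D : ℕ) (A : Fin 2 → Matrix (Fin D) (Fin D) ℂ)
    (hA0 : A 0 = 1) (hA1 : A 1 = shiftMat D) {k : ℕ} (s : Fin k → Fin 2) :
    prodA A s = shiftMat D ^ (Finset.univ.filter (fun t => s t = 1)).card := by
  induction k with
  | zero => simp [prodA]
  | succ k ih =>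
    rw [prodA, List.ofFn_succ, List.prod_cons]
    have htail : (List.ofFn fun t : Fin k => A (s t.succ)).prod
        = prodA A (fun t : Fin k => s t.succ) := rfl
    rw [htail, ih (fun t => s t.succ)]
    have hcard : (Finset.univ.filter (fun t : Fin (k+1) => s t = 1)).card
        = (if s 0 = 1 then 1 else 0)
          + (Finset.univ.filter (fun t : Fin k => s t.succ = 1)).card := by
      rw [Finset.card_filter, Finset.card_filter, Fin.sum_univ_succ]
    rw [hcard]
    rcases eq_or_ne (s 0) 1 with h | h
    · rw [if_pos h, h, hA1, ← pow_succ']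
      congr 1
      omega
    · have h0 : s 0 = 0 := by omega
      rw [if_neg h, h0, hA0, one_mul, Nat.zero_add]

lemma card_lt_filter (j m : ℕ) (hm : m ≤ j) :
    (Finset.univ.filter (fun t : Fin j => (t : ℕ) < m)).card = m := by
  rw [Finset.card_filter, Fin.sum_univ_eq_sum_range (fun t => if t < m then (1:ℕ) else 0) j,
    ← Finset.card_filter]
  have : Finset.filter (fun t => t < m) (Finset.range j) = Finset.range m := by
    ext t; simp; omega
  rw [this, Finset.card_range]

lemma shift_pow_mem (D : ℕ) (A : Fin 2 → Matrix (Fin D) (Fin D) ℂ)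
    (hA0 : A 0 = 1) (hA1 : A 1 = shiftMat D) (j m : ℕ) (hm : m ≤ j) :
    shiftMat D ^ m ∈ virtSpace A j := by
  apply Submodule.subset_span
  refine ⟨fun t => if (t : ℕ) < m then 1 else 0, ?_⟩
  show prodA A _ = _
  rw [prodA_eq_pow D A hA0 hA1]
  congr 1
  have : (Finset.univ.filter
      (fun t : Fin j => (if (t : ℕ) < m then (1 : Fin 2) else 0) = 1))
      = Finset.univ.filter (fun t : Fin j => (t : ℕ) < m) := by
    ext t
    by_cases h : (t : ℕ) < m <;> simp [h]
  rw [this, card_lt_filter j m hm]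

/-- the Dicke MPS tensor (A₀ = 1, A₁ = shift) is left (D−1)-stable with
witness Y₀ = 1, Y₁ = A₁^{D−1}. -/
theorem dicke_left_stable (D : ℕ) (hD : 0 < D) (A : Fin 2 → Matrix (Fin D) (Fin D) ℂ)
    (hA0 : A 0 = 1) (hA1 : A 1 = shiftMat D)
    (Y : Fin 2 → Matrix (Fin D) (Fin D) ℂ)
    (hY0 : Y 0 = 1) (hY1 : Y 1 = (shiftMat D) ^ (D - 1)) :
    (∀ i, ∀ M ∈ virtSpace A (D - 1 + 1), Y i * M ∈ virtSpace A (D - 1)) ∧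
    ∀ M ∈ virtSpace A (D - 1 + 1), (∑ i, A i * Y i) * M = M := by
  have hD1 : D - 1 + 1 = D := Nat.succ_pred_eq_of_pos hD
  constructor
  · intro i M hM
    have key : virtSpace A (D - 1 + 1) ≤
        Submodule.comap (LinearMap.mulLeft ℂ (Y i)) (virtSpace A (D - 1)) := by
      rw [virtSpace, Submodule.span_le]
      rintro _ ⟨s, rfl⟩
      simp only [Set.mem_setOf_eq, SetLike.mem_coe, Submodule.mem_comap,
        LinearMap.mulLeft_apply]
      rw [prodA_eq_pow D A hA0 hA1]
      set m := (Finset.univ.filter (fun t => s t = 1)).card with hm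
      have hmD : m ≤ D := by
        rw [hm]
        calc (Finset.univ.filter (fun t => s t = 1)).card
            ≤ (Finset.univ : Finset (Fin (D - 1 + 1))).card := Finset.card_filter_le _ _
          _ = D := by rw [Finset.card_univ, Fintype.card_fin, hD1]
      rcases eq_or_ne i 1 with hi | hi
      · rw [hi, hY1]
        rcases Nat.eq_zero_or_pos m with h0 | h0
        · rw [h0, pow_zero, mul_one]
          exact shift_pow_mem D A hA0 hA1 (D - 1) (D - 1) le_rfl
        · rw [← pow_add, shift_pow_eq_zero D _ (by omega)]
          exact Submodule.zero_mem _
      · have hi0 : i = 0 := by omega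
        rw [hi0, hY0, one_mul]
        rcases Nat.lt_or_ge m D with hlt | hge
        · exact shift_pow_mem D A hA0 hA1 (D - 1) m (by omega)
        · rw [shift_pow_eq_zero D m hge]
          exact Submodule.zero_mem _
    exact key hM
  · intro M _
    have hsum : (∑ i, A i * Y i) = 1 := by
      rw [Fin.sum_univ_two, hA0, hA1, hY0, hY1, one_mul, ← pow_succ', hD1,
        shift_pow_eq_zero D D le_rfl, add_zero]
    rw [hsum, one_mul]
end
end

section
/- The momentum-W tensor A_0 = e^{−ip}|0⟩⟨0| + |1⟩⟨1|, A_1 = |0⟩⟨1| is left 1-stable with Y_0 = e^{ip}|0⟩⟨0| + |1⟩⟨1| and Y_1 = 0. -/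
open scoped BigOperators

noncomputable section

lemma mem_virt_one {d D : ℕ} (A : Fin d → Matrix (Fin D) (Fin D) ℂ) (i : Fin d) :
    A i ∈ virtSpace A 1 := by
  apply Submodule.subset_span
  exact ⟨fun _ => i, by simp [prodA, List.ofFn_succ]⟩

/-- the momentum-W tensor is left 1-stable with
Y₀ = e^{ip}|0⟩⟨0| + |1⟩⟨1| and Y₁ = 0. -/
theorem momentumW_left_one_stable (p : ℝ) (A : Fin 2 → Matrix (Fin 2) (Fin 2) ℂ)
    (hA0 : A 0 = !![Complex.exp (-(Complex.I * p)), 0; 0, 1])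
    (hA1 : A 1 = !![0, 1; 0, 0])
    (Y : Fin 2 → Matrix (Fin 2) (Fin 2) ℂ)
    (hY0 : Y 0 = !![Complex.exp (Complex.I * p), 0; 0, 1])
    (hY1 : Y 1 = 0) :
    (∀ i, ∀ M ∈ virtSpace A 2, Y i * M ∈ virtSpace A 1) ∧
    ∀ M ∈ virtSpace A 2, (∑ i, A i * Y i) * M = M := by
  have hexp : Complex.exp (Complex.I * p) * Complex.exp (-(Complex.I * p)) = 1 := by
    rw [← Complex.exp_add]; simp
  have hexp' : Complex.exp (-(Complex.I * p)) * Complex.exp (Complex.I * p) = 1 := by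
    rw [← Complex.exp_add]; simp
  have hY0A0 : Y 0 * A 0 = 1 := by
    rw [hY0, hA0]
    ext i j
    fin_cases i <;> fin_cases j <;>
      simp [Matrix.mul_apply, Fin.sum_univ_two, Matrix.one_apply, hexp]
  have hY0A1 : Y 0 * A 1 = Complex.exp (Complex.I * p) • A 1 := by
    rw [hY0, hA1]
    ext i j
    fin_cases i <;> fin_cases j <;>
      simp [Matrix.mul_apply, Fin.sum_univ_two]
  have hA1A0 : A 1 * A 0 = A 1 := by
    rw [hA1, hA0]
    ext i j
    fin_cases i <;> fin_cases j <;>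
      simp [Matrix.mul_apply, Fin.sum_univ_two]
  have hA1A1 : A 1 * A 1 = 0 := by
    rw [hA1]
    ext i j
    fin_cases i <;> fin_cases j <;>
      simp [Matrix.mul_apply, Fin.sum_univ_two]
  have hsum : (∑ i, A i * Y i) = 1 := by
    rw [Fin.sum_univ_two, hA0, hA1, hY0, hY1, mul_zero, add_zero]
    ext i j
    fin_cases i <;> fin_cases j <;>
      simp [Matrix.mul_apply, Fin.sum_univ_two, Matrix.one_apply, hexp']
  constructor
  · intro i M hM
    have key : virtSpace A 2 ≤ Submodule.comap (LinearMap.mulLeft ℂ (Y i)) (virtSpace A 1) := by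
      rw [virtSpace, Submodule.span_le]
      rintro _ ⟨s, rfl⟩
      simp only [SetLike.mem_coe, Submodule.mem_comap, LinearMap.mulLeft_apply]
      have hprod : prodA A s = A (s 0) * A (s 1) := by
        simp [prodA, List.ofFn_succ]
      rw [hprod]
      have h2 : ∀ t : Fin 2, t = 0 ∨ t = 1 := by decide
      rcases h2 i with hi | hi <;> subst hi
      · rcases h2 (s 0) with h0 | h0 <;> rw [h0]
        · rw [← mul_assoc, hY0A0, one_mul]; exact mem_virt_one A _
        · rcases h2 (s 1) with h1 | h1 <;> rw [h1]
          · rw [← mul_assoc, hY0A1, smul_mul_assoc, hA1A0]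
            exact Submodule.smul_mem _ _ (mem_virt_one A 1)
          · rw [hA1A1, mul_zero]; exact Submodule.zero_mem _
      · rw [hY1, zero_mul]; exact Submodule.zero_mem _
    have := key hM
    simpa using this
  · intro M hM
    rw [hsum, one_mul]
end
end

section
/- The domain-wall tensor A_0 = |0⟩(⟨0|+⟨1|), A_1 = |1⟩⟨1| is left 2-stable with Y_0 = A_0(1 − A_1), Y_1 = A_1, and Z = A_0 Y_0 + A_1 Y_1 = 1; consequently it satisfies the intersection property (S_k ⊗ ℂ²) ∩ (ℂ² ⊗ S_k) = S_{k+1} for all k ≥ 3. -/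
open scoped BigOperators

noncomputable section

def M0 : Matrix (Fin 2) (Fin 2) ℂ := !![1,1;0,0]
def M1 : Matrix (Fin 2) (Fin 2) ℂ := !![0,0;0,1]
def ME : Matrix (Fin 2) (Fin 2) ℂ := !![0,1;0,0]

lemma m00 : M0 * M0 = M0 := by
  ext i j; fin_cases i <;> fin_cases j <;> simp [M0, Matrix.mul_apply, Fin.sum_univ_two]
lemma m01 : M0 * M1 = ME := by
  ext i j; fin_cases i <;> fin_cases j <;> simp [M0, M1, ME, Matrix.mul_apply, Fin.sum_univ_two]
lemma m0E : M0 * ME = ME := by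
  ext i j; fin_cases i <;> fin_cases j <;> simp [M0, ME, Matrix.mul_apply, Fin.sum_univ_two]
lemma m10 : M1 * M0 = 0 := by
  ext i j; fin_cases i <;> fin_cases j <;> simp [M0, M1, Matrix.mul_apply, Fin.sum_univ_two]
lemma m11 : M1 * M1 = M1 := by
  ext i j; fin_cases i <;> fin_cases j <;> simp [M1, Matrix.mul_apply, Fin.sum_univ_two]
lemma m1E : M1 * ME = 0 := by
  ext i j; fin_cases i <;> fin_cases j <;> simp [M1, ME, Matrix.mul_apply, Fin.sum_univ_two]

lemma fin2cases (v : Fin 2) : v = 0 ∨ v = 1 := by fin_cases v <;> simp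
lemma fin2_le_one (v : Fin 2) : v ≤ 1 := by fin_cases v <;> simp
lemma fin2_one_le (v : Fin 2) (h : (1:Fin 2) ≤ v) : v = 1 := le_antisymm (fin2_le_one v) h

open Classical in
def Srt' := 0
def Srt {n : ℕ} (s : Fin n → Fin 2) : Prop := ∀ i j, i ≤ j → s i ≤ s j

lemma prodA_cons {k : ℕ} (A : Fin 2 → Matrix (Fin 2) (Fin 2) ℂ) (s : Fin (k+1) → Fin 2) :
    prodA A s = A (s 0) * prodA A (Fin.tail s) := by
  simp [prodA, List.ofFn_succ, Fin.tail]

lemma allzero_succ {k : ℕ} (s : Fin (k+1) → Fin 2) :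
    (∀ i, s i = 0) ↔ s 0 = 0 ∧ ∀ i, Fin.tail s i = 0 := by
  constructor
  · exact fun h => ⟨h 0, fun i => h i.succ⟩
  · rintro ⟨h0, ht⟩ i
    rcases Fin.eq_zero_or_eq_succ i with rfl | ⟨j, rfl⟩
    · exact h0
    · exact ht j

lemma allone_succ {k : ℕ} (s : Fin (k+1) → Fin 2) :
    (∀ i, s i = 1) ↔ s 0 = 1 ∧ ∀ i, Fin.tail s i = 1 := by
  constructor
  · exact fun h => ⟨h 0, fun i => h i.succ⟩
  · rintro ⟨h0, ht⟩ i
    rcases Fin.eq_zero_or_eq_succ i with rfl | ⟨j, rfl⟩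
    · exact h0
    · exact ht j

lemma srt_of_zero {k : ℕ} (s : Fin (k+1) → Fin 2) (h0 : s 0 = 0) :
    Srt s ↔ Srt (Fin.tail s) := by
  constructor
  · intro h i j hij
    exact h i.succ j.succ (Fin.succ_le_succ_iff.mpr hij)
  · intro h i j hij
    rcases Fin.eq_zero_or_eq_succ i with rfl | ⟨i', rfl⟩
    · rw [h0]; exact Fin.zero_le _
    · rcases Fin.eq_zero_or_eq_succ j with rfl | ⟨j', rfl⟩
      · exact absurd (le_antisymm hij (Fin.zero_le _)) (Fin.succ_ne_zero i')
      · exact h i' j' (Fin.succ_le_succ_iff.mp hij)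

lemma srt_of_one {k : ℕ} (s : Fin (k+1) → Fin 2) (h0 : s 0 = 1) :
    Srt s ↔ ∀ i, s i = 1 := by
  constructor
  · intro h i
    exact fin2_one_le _ (h0 ▸ h 0 i (Fin.zero_le _))
  · intro h i j _
    rw [h i, h j]

open Classical in
lemma prodA_classify (A : Fin 2 → Matrix (Fin 2) (Fin 2) ℂ)
    (hA0 : A 0 = M0) (hA1 : A 1 = M1) :
    ∀ (k : ℕ) (s : Fin (k+1) → Fin 2),
    prodA A s = if ∀ i, s i = 0 then M0 else if ∀ i, s i = 1 then M1
      else if Srt s then ME else 0 := by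
  intro k
  induction k with
  | zero =>
    intro s
    have : prodA A s = A (s 0) := by
      rw [prodA_cons]
      simp [prodA, List.ofFn]
    rcases fin2cases (s 0) with h0 | h0
    · have hz : ∀ i, s i = 0 := fun i => by rw [Fin.eq_zero i]; exact h0
      rw [this, h0, hA0, if_pos hz]
    · have hz : ¬ ∀ i, s i = 0 := fun h => by simp [h 0] at h0
      have ho : ∀ i, s i = 1 := fun i => by rw [Fin.eq_zero i]; exact h0
      rw [this, h0, hA1, if_neg hz, if_pos ho]
  | succ k ih =>
    intro s
    rw [prodA_cons, ih (Fin.tail s)]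
    rcases fin2cases (s 0) with h0 | h0
    · -- s 0 = 0
      have hno : ¬ ∀ i, s i = 1 := fun h => by simp [h 0] at h0
      rw [h0, hA0]
      by_cases hz : ∀ i, Fin.tail s i = 0
      · have : ∀ i, s i = 0 := (allzero_succ s).2 ⟨h0, hz⟩
        rw [if_pos hz, if_pos this, m00]
      · have hzs : ¬ ∀ i, s i = 0 := fun h => hz fun i => h i.succ
        rw [if_neg hz, if_neg hzs, if_neg hno]
        by_cases ho : ∀ i, Fin.tail s i = 1
        · rw [if_pos ho, m01]
          have : Srt s := by
            rw [srt_of_zero s h0]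
            intro i j _; rw [ho i, ho j]
          rw [if_pos this]
        · rw [if_neg ho]
          by_cases hsrt : Srt (Fin.tail s)
          · rw [if_pos hsrt, if_pos ((srt_of_zero s h0).2 hsrt), m0E]
          · rw [if_neg hsrt, if_neg (fun h => hsrt ((srt_of_zero s h0).1 h)), mul_zero]
    · -- s 0 = 1
      have hzs : ¬ ∀ i, s i = 0 := fun h => by simp [h 0] at h0
      rw [h0, hA1, if_neg hzs]
      by_cases ho : ∀ i, Fin.tail s i = 1
      · have hos : ∀ i, s i = 1 := (allone_succ s).2 ⟨h0, ho⟩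
        have hz : ¬ ∀ i, Fin.tail s i = 0 := fun h => by have h1 := h 0; rw [ho 0] at h1; simp at h1
        rw [if_neg hz, if_pos ho, if_pos hos, m11]
      · have hos : ¬ ∀ i, s i = 1 := fun h => ho fun i => h i.succ
        have hsrtn : ¬ Srt s := fun h => hos ((srt_of_one s h0).1 h)
        rw [if_neg hos, if_neg hsrtn]
        by_cases hz : ∀ i, Fin.tail s i = 0
        · rw [if_pos hz, m10]
        · rw [if_neg hz, if_neg ho]
          by_cases hsrt : Srt (Fin.tail s)
          · rw [if_pos hsrt, m1E]
          · rw [if_neg hsrt, mul_zero]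

-- part 2
def cz (n : ℕ) : Fin n → Fin 2 := fun _ => 0
def co (n : ℕ) : Fin n → Fin 2 := fun _ => 1
def cw (n : ℕ) : Fin n → Fin 2 := fun i => if (i : ℕ) = 0 then 0 else 1

open Classical in
def canon {n : ℕ} (s : Fin n → Fin 2) : Fin n → Fin 2 :=
  if ∀ i, s i = 0 then cz n else if ∀ i, s i = 1 then co n else cw n

open Classical in
def specSub (n : ℕ) : Submodule ℂ ((Fin n → Fin 2) → ℂ) where
  carrier := {v | ∀ s, v s = if Srt s then v (canon s) else 0}
  add_mem' := by
    intro u v hu hv s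
    simp only [Pi.add_apply, hu s, hv s]
    split <;> simp
  zero_mem' := by intro s; simp
  smul_mem' := by
    intro c v hv s
    simp only [Pi.smul_apply, hv s, smul_eq_mul]
    split <;> simp

lemma srt_const {n : ℕ} (c : Fin 2) : Srt (fun _ : Fin n => c) := fun _ _ _ => le_refl c

lemma srt_cz (n : ℕ) : Srt (cz n) := srt_const 0
lemma srt_co (n : ℕ) : Srt (co n) := srt_const 1

lemma srt_cw (n : ℕ) : Srt (cw n) := by
  intro i j hij
  unfold cw
  by_cases hi : (i : ℕ) = 0
  · simp [hi]
  · have hj : (j : ℕ) ≠ 0 := by have := Fin.le_def.mp hij; omega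
    simp [hi, hj]

lemma cz_all (n : ℕ) : ∀ i, cz n i = 0 := fun _ => rfl
lemma co_all (n : ℕ) : ∀ i, co n i = 1 := fun _ => rfl
lemma cz_not_all_one (k : ℕ) : ¬ ∀ i, cz (k+1) i = 1 := fun h => by
  have := h 0; simp [cz] at this
lemma co_not_all_zero (k : ℕ) : ¬ ∀ i, co (k+1) i = 0 := fun h => by
  have := h 0; simp [co] at this
lemma cw_not_all_zero (k : ℕ) : ¬ ∀ i, cw (k+2) i = 0 := fun h => by
  have := h 1; simp [cw] at this
lemma cw_not_all_one (k : ℕ) : ¬ ∀ i, cw (k+2) i = 1 := fun h => by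
  have := h 0; simp [cw] at this

open Classical in
lemma canon_z {n : ℕ} (s : Fin n → Fin 2) (h : ∀ i, s i = 0) : canon s = cz n := if_pos h
open Classical in
lemma canon_o {n : ℕ} (s : Fin n → Fin 2) (h0 : ¬ ∀ i, s i = 0) (h : ∀ i, s i = 1) :
    canon s = co n := by rw [canon, if_neg h0, if_pos h]
open Classical in
lemma canon_w {n : ℕ} (s : Fin n → Fin 2) (h0 : ¬ ∀ i, s i = 0) (h1 : ¬ ∀ i, s i = 1) :
    canon s = cw n := by rw [canon, if_neg h0, if_neg h1]

open Classical in
lemma mpsVec_eq (A : Fin 2 → Matrix (Fin 2) (Fin 2) ℂ)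
    (hA0 : A 0 = M0) (hA1 : A 1 = M1) (X : Matrix (Fin 2) (Fin 2) ℂ)
    (k : ℕ) (s : Fin (k+1) → Fin 2) :
    mpsVec A X (k+1) s = if ∀ i, s i = 0 then X 0 0 + X 1 0
      else if ∀ i, s i = 1 then X 1 1 else if Srt s then X 1 0 else 0 := by
  rw [mpsVec, prodA_classify A hA0 hA1 k s]
  split_ifs with h1 h2 h3
  · simp [M0, Matrix.trace, Matrix.mul_apply, Fin.sum_univ_two]
  · simp [M1, Matrix.trace, Matrix.mul_apply, Fin.sum_univ_two]
  · simp [ME, Matrix.trace, Matrix.mul_apply, Fin.sum_univ_two]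
  · simp

open Classical in
lemma mpsSpace_eq (A : Fin 2 → Matrix (Fin 2) (Fin 2) ℂ)
    (hA0 : A 0 = M0) (hA1 : A 1 = M1) (k : ℕ) :
    mpsSpace A (k+2) = specSub (k+2) := by
  apply le_antisymm
  · rw [mpsSpace, Submodule.span_le]
    rintro v ⟨X, rfl⟩
    intro s
    show mpsVec A X (k+2) s = if Srt s then mpsVec A X (k+2) (canon s) else 0
    rw [mpsVec_eq A hA0 hA1 X _ s]
    by_cases hz : ∀ i, s i = 0
    · have hsrt : Srt s := fun i j _ => by rw [hz i, hz j]
      rw [if_pos hz, if_pos hsrt, canon_z s hz,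
        mpsVec_eq A hA0 hA1, if_pos (cz_all _)]
    · rw [if_neg hz]
      by_cases ho : ∀ i, s i = 1
      · have hsrt : Srt s := fun i j _ => by rw [ho i, ho j]
        rw [if_pos ho, if_pos hsrt, canon_o s hz ho,
          mpsVec_eq A hA0 hA1, if_neg (co_not_all_zero _), if_pos (co_all _)]
      · rw [if_neg ho]
        by_cases hs : Srt s
        · rw [if_pos hs, if_pos hs, canon_w s hz ho, mpsVec_eq A hA0 hA1,
            if_neg (cw_not_all_zero _), if_neg (cw_not_all_one _), if_pos (srt_cw _)]
        · rw [if_neg hs, if_neg hs]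
  · intro v hv
    have hrep : v = v (cz (k+2)) • mpsVec A !![1,0;0,0] (k+2)
        + v (co (k+2)) • mpsVec A !![0,0;0,1] (k+2)
        + v (cw (k+2)) • mpsVec A !![-1,0;1,0] (k+2) := by
      funext s
      have hvs := hv s
      simp only [Pi.add_apply, Pi.smul_apply, smul_eq_mul,
        mpsVec_eq A hA0 hA1 _ (k+1) s]
      by_cases hz : ∀ i, s i = 0
      · have hsrt : Srt s := fun i j _ => by rw [hz i, hz j]
        rw [hvs, if_pos hsrt, canon_z s hz]
        simp [hz]
      · by_cases ho : ∀ i, s i = 1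
        · have hsrt : Srt s := fun i j _ => by rw [ho i, ho j]
          rw [hvs, if_pos hsrt, canon_o s hz ho]
          simp [hz, ho]
        · by_cases hs : Srt s
          · rw [hvs, if_pos hs, canon_w s hz ho]
            simp [hz, ho, hs]
          · rw [hvs, if_neg hs]
            simp [hz, ho, hs]
    rw [hrep]
    refine add_mem (add_mem (Submodule.smul_mem _ _ ?_) (Submodule.smul_mem _ _ ?_))
      (Submodule.smul_mem _ _ ?_) <;>
      exact Submodule.subset_span ⟨_, rfl⟩

----------------- PART 3 -----------------

open Classical in
def leftSub (n : ℕ) : Submodule ℂ ((Fin (n+1) → Fin 2) → ℂ) where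
  carrier := {v | ∀ s, v s = if Srt (Fin.init s) then
      v (Fin.snoc (canon (Fin.init s)) (s (Fin.last n))) else 0}
  add_mem' := by
    intro u v hu hv s
    simp only [Pi.add_apply, hu s, hv s]
    split <;> simp
  zero_mem' := by intro s; simp
  smul_mem' := by
    intro c v hv s
    simp only [Pi.smul_apply, hv s, smul_eq_mul]
    split <;> simp

open Classical in
def rightSub (n : ℕ) : Submodule ℂ ((Fin (n+1) → Fin 2) → ℂ) where
  carrier := {v | ∀ s, v s = if Srt (Fin.tail s) then
      v (Fin.cons (s 0) (canon (Fin.tail s))) else 0}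
  add_mem' := by
    intro u v hu hv s
    simp only [Pi.add_apply, hu s, hv s]
    split <;> simp
  zero_mem' := by intro s; simp
  smul_mem' := by
    intro c v hv s
    simp only [Pi.smul_apply, hv s, smul_eq_mul]
    split <;> simp

open Classical in
lemma mem_leftSub {n : ℕ} {v : (Fin (n+1) → Fin 2) → ℂ} :
    v ∈ leftSub n ↔ ∀ s, v s = if Srt (Fin.init s) then
      v (Fin.snoc (canon (Fin.init s)) (s (Fin.last n))) else 0 := Iff.rfl
open Classical in
lemma mem_rightSub {n : ℕ} {v : (Fin (n+1) → Fin 2) → ℂ} :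
    v ∈ rightSub n ↔ ∀ s, v s = if Srt (Fin.tail s) then
      v (Fin.cons (s 0) (canon (Fin.tail s))) else 0 := Iff.rfl
open Classical in
lemma mem_specSub {n : ℕ} {v : (Fin n → Fin 2) → ℂ} :
    v ∈ specSub n ↔ ∀ s, v s = if Srt s then v (canon s) else 0 := Iff.rfl

lemma srt_init {n : ℕ} (s : Fin (n+1) → Fin 2) (h : Srt s) : Srt (Fin.init s) :=
  fun i j hij => h _ _ (Fin.castSucc_le_castSucc_iff.mpr hij)
lemma srt_tail {n : ℕ} (s : Fin (n+1) → Fin 2) (h : Srt s) : Srt (Fin.tail s) :=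
  fun i j hij => h _ _ (Fin.succ_le_succ_iff.mpr hij)

lemma snoc_cw (n : ℕ) : Fin.snoc (cw (n+1)) (1 : Fin 2) = cw (n+2) := by
  funext i
  induction i using Fin.lastCases with
  | last =>
    rw [Fin.snoc_last]
    simp [cw]
  | cast j =>
    rw [Fin.snoc_castSucc]
    simp [cw]

lemma srt_nonone {n : ℕ} (s : Fin (n+1) → Fin 2) (h : Srt s) (hno : ¬ ∀ i, s i = 1) :
    s 0 = 0 := by
  push_neg at hno
  obtain ⟨i, hi⟩ := hno
  have h0 : s i = 0 := (fin2cases _).resolve_right hi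
  have := h 0 i (Fin.zero_le _)
  rw [h0, Fin.le_zero_iff] at this
  exact this

lemma srt_lastone {n : ℕ} (s : Fin (n+1) → Fin 2) (h : Srt s) (hnz : ¬ ∀ i, s i = 0) :
    s (Fin.last n) = 1 := by
  push_neg at hnz
  obtain ⟨i, hi⟩ := hnz
  have h1 : s i = 1 := (fin2cases _).resolve_left hi
  exact fin2_one_le _ (h1 ▸ h i (Fin.last n) (Fin.le_last _))

lemma not_le_fin2 {a b : Fin 2} (h : ¬ a ≤ b) : a = 1 ∧ b = 0 := by
  rcases fin2cases a with ha | ha <;> rcases fin2cases b with hb | hb <;>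
    simp_all [fin2_le_one, Fin.zero_le]

open Classical in
lemma inter_eq (k : ℕ) :
    leftSub (k+3) ⊓ rightSub (k+3) = specSub (k+4) := by
  apply le_antisymm
  · intro v hv
    rw [Submodule.mem_inf] at hv
    obtain ⟨hl, hr⟩ := hv
    rw [mem_leftSub] at hl
    rw [mem_rightSub] at hr
    rw [mem_specSub]
    intro s
    by_cases hS : Srt s
    · rw [if_pos hS]
      by_cases hz : ∀ i, s i = 0
      · rw [canon_z _ hz, show s = cz (k+4) from funext hz]
      · by_cases ho : ∀ i, s i = 1
        · rw [canon_o _ hz ho, show s = co (k+4) from funext ho]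
        · rw [canon_w _ hz ho]
          have hs0 : s 0 = 0 := srt_nonone s hS ho
          have hsl : s (Fin.last (k+3)) = 1 := srt_lastone s hS hz
          have hsi : Srt (Fin.init s) := srt_init s hS
          by_cases hiz : ∀ i, Fin.init s i = 0
          · -- s = 0...01 ; go through the right characterization then left
            have hst : Srt (Fin.tail s) := srt_tail s hS
            have htz : ¬ ∀ i, Fin.tail s i = 0 := by
              intro h
              have := h (Fin.last (k+2))
              rw [show Fin.tail s (Fin.last (k+2)) = s (Fin.last (k+3)) from
                congrArg s (Fin.succ_last _), hsl] at this
              exact absurd this (by decide)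
            have hto : ¬ ∀ i, Fin.tail s i = 1 := by
              intro h
              have h1 := h 0
              rw [show Fin.tail s 0 = Fin.init s 1 from rfl, hiz 1] at h1
              exact absurd h1 (by decide)
            rw [hr s, if_pos hst, canon_w _ htz hto, hs0]
            -- v (cons 0 (cw (k+3))) = v (cw (k+4))
            set s'' : Fin (k+4) → Fin 2 := Fin.cons 0 (cw (k+3)) with hs''
            have hval : ∀ m : Fin (k+4), s'' m = if (m : ℕ) ≤ 1 then 0 else 1 := by
              intro m
              rcases Fin.eq_zero_or_eq_succ m with rfl | ⟨j, rfl⟩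
              · simp [hs'', Fin.cons_zero]
              · rw [hs'', Fin.cons_succ]
                simp only [cw, Fin.val_succ]
                by_cases hj : (j : ℕ) = 0 <;> simp [hj]
            have h1 : Srt (Fin.init s'') := by
              intro i j hij
              show s'' i.castSucc ≤ s'' j.castSucc
              rw [hval, hval]
              have := Fin.le_def.mp hij
              simp only [Fin.coe_castSucc]
              split_ifs with a b
              · exact le_refl _
              · exact Fin.zero_le _
              · omega
              · exact le_refl _
            have h2 : ¬ ∀ i, Fin.init s'' i = 0 := by
              intro h
              have := h (Fin.last (k+2))
              rw [show Fin.init s'' (Fin.last (k+2)) = s'' ((Fin.last (k+2)).castSucc) from rfl,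
                hval] at this
              simp at this
            have h3 : ¬ ∀ i, Fin.init s'' i = 1 := by
              intro h
              have := h 0
              rw [show Fin.init s'' 0 = s'' ((0 : Fin (k+3)).castSucc) from rfl, hval] at this
              simp at this
            have h4 : s'' (Fin.last (k+3)) = 1 := by rw [hval]; simp
            rw [hl s'', if_pos h1, canon_w _ h2 h3, h4, snoc_cw]
          · -- init s is nonconstant: left characterization suffices
            have hino : ¬ ∀ i, Fin.init s i = 1 := by
              intro h
              have := h 0
              rw [show Fin.init s 0 = s 0 from congrArg s (Fin.castSucc_zero), hs0] at this
              exact absurd this (by decide)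
            rw [hl s, if_pos hsi, canon_w _ hiz hino, hsl, snoc_cw]
    · rw [if_neg hS]
      have : ∃ i j, i ≤ j ∧ ¬ s i ≤ s j := by
        by_contra h
        push_neg at h
        exact hS h
      obtain ⟨i, j, hij, hns⟩ := this
      obtain ⟨h1, h0⟩ := not_le_fin2 hns
      by_cases hj : j = Fin.last (k+3)
      · subst hj
        by_cases hi : i = 0
        · subst hi
          rcases fin2cases (s 1) with h1' | h1'
          · have : ¬ Srt (Fin.init s) := by
              intro h
              have := h 0 1 (Fin.zero_le _)
              rw [show Fin.init s 0 = s 0 from congrArg s (Fin.castSucc_zero),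
                show Fin.init s 1 = s 1 from congrArg s (Fin.castSucc_one), h1, h1'] at this
              exact absurd this (by decide)
            rw [hl s, if_neg this]
          · have : ¬ Srt (Fin.tail s) := by
              intro h
              have := h 0 (Fin.last (k+2)) (Fin.zero_le _)
              rw [show Fin.tail s 0 = s 1 from congrArg s (Fin.succ_zero_eq_one),
                show Fin.tail s (Fin.last (k+2)) = s (Fin.last (k+3)) from
                  congrArg s (Fin.succ_last _), h1', h0] at this
              exact absurd this (by decide)
            rw [hr s, if_neg this]
        · obtain ⟨i', rfl⟩ := Fin.eq_succ_of_ne_zero hi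
          have : ¬ Srt (Fin.tail s) := by
            intro h
            have := h i' (Fin.last (k+2)) (Fin.le_last _)
            rw [show Fin.tail s i' = s i'.succ from rfl,
              show Fin.tail s (Fin.last (k+2)) = s (Fin.last (k+3)) from
                congrArg s (Fin.succ_last _), h1, h0] at this
            exact absurd this (by decide)
          rw [hr s, if_neg this]
      · obtain ⟨j', rfl⟩ := Fin.exists_castSucc_eq.mpr hj
        have hi : i ≠ Fin.last (k+3) := (lt_of_le_of_lt hij (Fin.castSucc_lt_last j')).ne
        obtain ⟨i', rfl⟩ := Fin.exists_castSucc_eq.mpr hi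
        have : ¬ Srt (Fin.init s) := by
          intro h
          have := h i' j' (Fin.castSucc_le_castSucc_iff.mp hij)
          rw [show Fin.init s i' = s i'.castSucc from rfl,
            show Fin.init s j' = s j'.castSucc from rfl, h1, h0] at this
          exact absurd this (by decide)
        rw [hl s, if_neg this]
  · intro v hv
    rw [mem_specSub] at hv
    rw [Submodule.mem_inf]
    refine ⟨?_, ?_⟩
    · -- v ∈ leftSub
      rw [mem_leftSub]
      intro s
      by_cases hsi : Srt (Fin.init s)
      · rw [if_pos hsi]
        by_cases hz : ∀ i, Fin.init s i = 0
        · rw [canon_z _ hz]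
          conv_lhs => rw [← Fin.snoc_init_self s,
            show Fin.init s = cz (k+3) by funext i; exact hz i]
        · by_cases ho : ∀ i, Fin.init s i = 1
          · rw [canon_o _ hz ho]
            conv_lhs => rw [← Fin.snoc_init_self s,
              show Fin.init s = co (k+3) by funext i; exact ho i]
          · rw [canon_w _ hz ho]
            have hlast1 : Fin.init s (Fin.last (k+2)) = 1 := srt_lastone _ hsi hz
            have hfirst0 : Fin.init s 0 = 0 := srt_nonone _ hsi ho
            rcases fin2cases (s (Fin.last (k+3))) with hlst | hlst
            · -- last symbol 0: both sides vanish
              have hnS : ¬ Srt s := by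
                intro h
                have := h ((Fin.last (k+2)).castSucc) (Fin.last (k+3)) (Fin.le_last _)
                rw [show s ((Fin.last (k+2)).castSucc) = Fin.init s (Fin.last (k+2)) from rfl,
                  hlast1, hlst] at this
                exact absurd this (by decide)
              rw [hv s, if_neg hnS, hlst]
              have hnS' : ¬ Srt (Fin.snoc (cw (k+3)) (0 : Fin 2)) := by
                intro h
                have := h ((Fin.last (k+2)).castSucc) (Fin.last (k+3)) (Fin.le_last _)
                rw [Fin.snoc_castSucc, Fin.snoc_last] at this
                have hcw : cw (k+3) (Fin.last (k+2)) = 1 := by simp [cw]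
                rw [hcw] at this
                exact absurd this (by decide)
              rw [hv _, if_neg hnS']
            · -- last symbol 1
              have hS : Srt s := by
                intro i j hij
                by_cases hj : j = Fin.last (k+3)
                · rw [hj, hlst]; exact fin2_le_one _
                · obtain ⟨j', rfl⟩ := Fin.exists_castSucc_eq.mpr hj
                  have hi : i ≠ Fin.last (k+3) :=
                    (lt_of_le_of_lt hij (Fin.castSucc_lt_last j')).ne
                  obtain ⟨i', rfl⟩ := Fin.exists_castSucc_eq.mpr hi
                  exact hsi i' j' (Fin.castSucc_le_castSucc_iff.mp hij)
              have hnz : ¬ ∀ i, s i = 0 := by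
                intro h
                have := h (Fin.last (k+3)); rw [hlst] at this
                exact absurd this (by decide)
              have hno : ¬ ∀ i, s i = 1 := by
                intro h
                have := h ((0 : Fin (k+3)).castSucc)
                rw [show s ((0 : Fin (k+3)).castSucc) = Fin.init s 0 from rfl, hfirst0] at this
                exact absurd this (by decide)
              rw [hv s, if_pos hS, canon_w _ hnz hno, hlst, snoc_cw]
      · rw [if_neg hsi]
        have : ¬ Srt s := fun h => hsi (srt_init s h)
        rw [hv s, if_neg this]
    · -- v ∈ rightSub
      rw [mem_rightSub]
      intro s
      by_cases hst : Srt (Fin.tail s)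
      · rw [if_pos hst]
        by_cases hz : ∀ i, Fin.tail s i = 0
        · rw [canon_z _ hz]
          conv_lhs => rw [← Fin.cons_self_tail s,
            show Fin.tail s = cz (k+3) by funext i; exact hz i]
        · by_cases ho : ∀ i, Fin.tail s i = 1
          · rw [canon_o _ hz ho]
            conv_lhs => rw [← Fin.cons_self_tail s,
              show Fin.tail s = co (k+3) by funext i; exact ho i]
          · rw [canon_w _ hz ho]
            have hlast1 : Fin.tail s (Fin.last (k+2)) = 1 := srt_lastone _ hst hz
            have hfirst0 : Fin.tail s 0 = 0 := srt_nonone _ hst ho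
            rcases fin2cases (s 0) with h0 | h0
            · -- first symbol 0
              have hS : Srt s := (srt_of_zero s h0).mpr hst
              have hnz : ¬ ∀ i, s i = 0 := by
                intro h
                have := h ((Fin.last (k+2)).succ)
                rw [show s ((Fin.last (k+2)).succ) = Fin.tail s (Fin.last (k+2)) from rfl,
                  hlast1] at this
                exact absurd this (by decide)
              have hno : ¬ ∀ i, s i = 1 := by
                intro h
                have := h 0; rw [h0] at this
                exact absurd this (by decide)
              rw [hv s, if_pos hS, canon_w _ hnz hno, h0]
              -- v (cw (k+4)) = v (cons 0 (cw (k+3)))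
              set s'' : Fin (k+4) → Fin 2 := Fin.cons 0 (cw (k+3)) with hs''
              have hS'' : Srt s'' := by
                refine (srt_of_zero s'' (Fin.cons_zero _ _)).mpr ?_
                rw [show Fin.tail s'' = cw (k+3) from Fin.tail_cons _ _]
                exact srt_cw _
              have hnz'' : ¬ ∀ i, s'' i = 0 := by
                intro h
                have := h ((Fin.last (k+2)).succ)
                rw [show s'' ((Fin.last (k+2)).succ) = cw (k+3) (Fin.last (k+2)) from
                  Fin.cons_succ _ _ _] at this
                simp [cw] at this
              have hno'' : ¬ ∀ i, s'' i = 1 := by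
                intro h
                have := h 0
                rw [show s'' 0 = 0 from Fin.cons_zero _ _] at this
                exact absurd this (by decide)
              rw [hv s'', if_pos hS'', canon_w _ hnz'' hno'']
            · -- first symbol 1: both sides vanish
              have hnS : ¬ Srt s := by
                intro h
                have := h 0 ((0 : Fin (k+3)).succ) (Fin.zero_le _)
                rw [h0, show s ((0 : Fin (k+3)).succ) = Fin.tail s 0 from rfl, hfirst0] at this
                exact absurd this (by decide)
              rw [hv s, if_neg hnS, h0]
              have hnS' : ¬ Srt (Fin.cons (1 : Fin 2) (cw (k+3))) := by
                intro h
                have := h 0 ((0 : Fin (k+3)).succ) (Fin.zero_le _)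
                rw [Fin.cons_zero, Fin.cons_succ] at this
                simp only [cw] at this
                norm_num at this
              rw [hv _, if_neg hnS']
      · rw [if_neg hst]
        have : ¬ Srt s := fun h => hst (srt_tail s h)
        rw [hv s, if_neg this]

----------------- indicators -----------------

open Classical in
def f0 (n : ℕ) : (Fin n → Fin 2) → ℂ := fun t => if ∀ i, t i = 0 then 1 else 0
open Classical in
def f1 (n : ℕ) : (Fin n → Fin 2) → ℂ :=
  fun t => if ∀ i, t i = 0 then 0 else if ∀ i, t i = 1 then 1 else 0
open Classical in
def fw (n : ℕ) : (Fin n → Fin 2) → ℂ :=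
  fun t => if ∀ i, t i = 0 then 0 else if ∀ i, t i = 1 then 0 else if Srt t then 1 else 0
open Classical in
def eb (b : Fin 2) : (Fin 1 → Fin 2) → ℂ := fun t => if t 0 = b then 1 else 0

lemma fin01 : ((0:Fin 2) = 1) ↔ False := by decide
lemma fin10 : ((1:Fin 2) = 0) ↔ False := by decide

lemma f0_mem (A : Fin 2 → Matrix (Fin 2) (Fin 2) ℂ) (hA0 : A 0 = M0) (hA1 : A 1 = M1)
    (k : ℕ) : f0 (k+2) ∈ mpsSpace A (k+2) := by
  have h : f0 (k+2) = mpsVec A !![1,0;0,0] (k+2) := by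
    funext t
    rw [mpsVec_eq A hA0 hA1 _ _ t, f0]
    split_ifs <;> norm_num
  rw [h]
  exact Submodule.subset_span ⟨_, rfl⟩

lemma f1_mem (A : Fin 2 → Matrix (Fin 2) (Fin 2) ℂ) (hA0 : A 0 = M0) (hA1 : A 1 = M1)
    (k : ℕ) : f1 (k+2) ∈ mpsSpace A (k+2) := by
  have h : f1 (k+2) = mpsVec A !![0,0;0,1] (k+2) := by
    funext t
    rw [mpsVec_eq A hA0 hA1 _ _ t, f1]
    split_ifs <;> norm_num
  rw [h]
  exact Submodule.subset_span ⟨_, rfl⟩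

lemma fw_mem (A : Fin 2 → Matrix (Fin 2) (Fin 2) ℂ) (hA0 : A 0 = M0) (hA1 : A 1 = M1)
    (k : ℕ) : fw (k+2) ∈ mpsSpace A (k+2) := by
  have h : fw (k+2) = mpsVec A !![-1,0;1,0] (k+2) := by
    funext t
    rw [mpsVec_eq A hA0 hA1 _ _ t, fw]
    split_ifs <;> norm_num
  rw [h]
  exact Submodule.subset_span ⟨_, rfl⟩

----------------- tensSnoc characterization -----------------

open Classical in
lemma tensSnoc_char (A : Fin 2 → Matrix (Fin 2) (Fin 2) ℂ) (hA0 : A 0 = M0) (hA1 : A 1 = M1)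
    (k : ℕ) : tensSnoc (mpsSpace A (k+2)) ⊤ = leftSub (k+2) := by
  apply le_antisymm
  · rw [tensSnoc, Submodule.span_le]
    rintro v ⟨f, hf, g, -, rfl⟩
    rw [mpsSpace_eq A hA0 hA1, mem_specSub] at hf
    intro s
    show f (fun t => s (Fin.castSucc t)) * g (fun _ => s (Fin.last (k+2))) = _
    simp only [Fin.snoc_castSucc, Fin.snoc_last]
    rw [show (fun t => s (Fin.castSucc t)) = Fin.init s from rfl, hf (Fin.init s)]
    split_ifs with h
    · rfl
    · rw [zero_mul]
  · intro v hv
    rw [mem_leftSub] at hv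
    have hrep : v =
        v (Fin.snoc (cz (k+2)) 0) •
          (fun s => f0 (k+2) (fun t => s (Fin.castSucc t)) * eb 0 (fun _ => s (Fin.last (k+2))))
      + v (Fin.snoc (cz (k+2)) 1) •
          (fun s => f0 (k+2) (fun t => s (Fin.castSucc t)) * eb 1 (fun _ => s (Fin.last (k+2))))
      + v (Fin.snoc (co (k+2)) 0) •
          (fun s => f1 (k+2) (fun t => s (Fin.castSucc t)) * eb 0 (fun _ => s (Fin.last (k+2))))
      + v (Fin.snoc (co (k+2)) 1) •
          (fun s => f1 (k+2) (fun t => s (Fin.castSucc t)) * eb 1 (fun _ => s (Fin.last (k+2))))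
      + v (Fin.snoc (cw (k+2)) 0) •
          (fun s => fw (k+2) (fun t => s (Fin.castSucc t)) * eb 0 (fun _ => s (Fin.last (k+2))))
      + v (Fin.snoc (cw (k+2)) 1) •
          (fun s => fw (k+2) (fun t => s (Fin.castSucc t)) * eb 1 (fun _ => s (Fin.last (k+2)))) := by
      funext s
      rw [hv s]
      simp only [Pi.add_apply, Pi.smul_apply, smul_eq_mul]
      rw [show (fun t => s (Fin.castSucc t)) = Fin.init s from rfl]
      by_cases hz : ∀ i, Fin.init s i = 0
      · have hsrt : Srt (Fin.init s) := fun i j _ => by rw [hz i, hz j]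
        rw [if_pos hsrt, canon_z _ hz]
        rcases fin2cases (s (Fin.last (k+2))) with hlst | hlst <;>
          rw [hlst] <;> simp [f0, f1, fw, eb, hz, fin01, fin10]
      · by_cases ho : ∀ i, Fin.init s i = 1
        · have hsrt : Srt (Fin.init s) := fun i j _ => by rw [ho i, ho j]
          rw [if_pos hsrt, canon_o _ hz ho]
          rcases fin2cases (s (Fin.last (k+2))) with hlst | hlst <;>
            rw [hlst] <;> simp [f0, f1, fw, eb, ho, fin01, fin10]
        · by_cases hsrt : Srt (Fin.init s)
          · rw [if_pos hsrt, canon_w _ hz ho]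
            rcases fin2cases (s (Fin.last (k+2))) with hlst | hlst <;>
              rw [hlst] <;> simp [f0, f1, fw, eb, hz, ho, hsrt, fin01, fin10]
          · rw [if_neg hsrt]
            simp [f0, f1, fw, eb, hz, ho, hsrt, fin01, fin10]
    rw [hrep]
    refine add_mem (add_mem (add_mem (add_mem (add_mem
        (Submodule.smul_mem _ _ ?_) (Submodule.smul_mem _ _ ?_)) (Submodule.smul_mem _ _ ?_))
        (Submodule.smul_mem _ _ ?_)) (Submodule.smul_mem _ _ ?_)) (Submodule.smul_mem _ _ ?_)
    · exact Submodule.subset_span ⟨_, f0_mem A hA0 hA1 k, eb 0, Submodule.mem_top, rfl⟩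
    · exact Submodule.subset_span ⟨_, f0_mem A hA0 hA1 k, eb 1, Submodule.mem_top, rfl⟩
    · exact Submodule.subset_span ⟨_, f1_mem A hA0 hA1 k, eb 0, Submodule.mem_top, rfl⟩
    · exact Submodule.subset_span ⟨_, f1_mem A hA0 hA1 k, eb 1, Submodule.mem_top, rfl⟩
    · exact Submodule.subset_span ⟨_, fw_mem A hA0 hA1 k, eb 0, Submodule.mem_top, rfl⟩
    · exact Submodule.subset_span ⟨_, fw_mem A hA0 hA1 k, eb 1, Submodule.mem_top, rfl⟩

open Classical in
lemma tensCons_char (A : Fin 2 → Matrix (Fin 2) (Fin 2) ℂ) (hA0 : A 0 = M0) (hA1 : A 1 = M1)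
    (k : ℕ) : tensCons ⊤ (mpsSpace A (k+2)) = rightSub (k+2) := by
  apply le_antisymm
  · rw [tensCons, Submodule.span_le]
    rintro v ⟨f, hf, g, -, rfl⟩
    rw [mpsSpace_eq A hA0 hA1, mem_specSub] at hf
    intro s
    show g (fun _ => s 0) * f (fun t => s t.succ) = _
    simp only [Fin.cons_zero, Fin.cons_succ]
    rw [show (fun t => s t.succ) = Fin.tail s from rfl, hf (Fin.tail s)]
    split_ifs with h
    · rfl
    · rw [mul_zero]
  · intro v hv
    rw [mem_rightSub] at hv
    have hrep : v =
        v (Fin.cons 0 (cz (k+2))) •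
          (fun s => eb 0 (fun _ => s 0) * f0 (k+2) (fun t => s t.succ))
      + v (Fin.cons 1 (cz (k+2))) •
          (fun s => eb 1 (fun _ => s 0) * f0 (k+2) (fun t => s t.succ))
      + v (Fin.cons 0 (co (k+2))) •
          (fun s => eb 0 (fun _ => s 0) * f1 (k+2) (fun t => s t.succ))
      + v (Fin.cons 1 (co (k+2))) •
          (fun s => eb 1 (fun _ => s 0) * f1 (k+2) (fun t => s t.succ))
      + v (Fin.cons 0 (cw (k+2))) •
          (fun s => eb 0 (fun _ => s 0) * fw (k+2) (fun t => s t.succ))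
      + v (Fin.cons 1 (cw (k+2))) •
          (fun s => eb 1 (fun _ => s 0) * fw (k+2) (fun t => s t.succ)) := by
      funext s
      rw [hv s]
      simp only [Pi.add_apply, Pi.smul_apply, smul_eq_mul]
      rw [show (fun t => s t.succ) = Fin.tail s from rfl]
      by_cases hz : ∀ i, Fin.tail s i = 0
      · have hsrt : Srt (Fin.tail s) := fun i j _ => by rw [hz i, hz j]
        rw [if_pos hsrt, canon_z _ hz]
        rcases fin2cases (s 0) with h0 | h0 <;>
          rw [h0] <;> simp [f0, f1, fw, eb, hz, fin01, fin10]
      · by_cases ho : ∀ i, Fin.tail s i = 1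
        · have hsrt : Srt (Fin.tail s) := fun i j _ => by rw [ho i, ho j]
          rw [if_pos hsrt, canon_o _ hz ho]
          rcases fin2cases (s 0) with h0 | h0 <;>
            rw [h0] <;> simp [f0, f1, fw, eb, ho, fin01, fin10]
        · by_cases hsrt : Srt (Fin.tail s)
          · rw [if_pos hsrt, canon_w _ hz ho]
            rcases fin2cases (s 0) with h0 | h0 <;>
              rw [h0] <;> simp [f0, f1, fw, eb, hz, ho, hsrt, fin01, fin10]
          · rw [if_neg hsrt]
            simp [f0, f1, fw, eb, hz, ho, hsrt, fin01, fin10]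
    rw [hrep]
    refine add_mem (add_mem (add_mem (add_mem (add_mem
        (Submodule.smul_mem _ _ ?_) (Submodule.smul_mem _ _ ?_)) (Submodule.smul_mem _ _ ?_))
        (Submodule.smul_mem _ _ ?_)) (Submodule.smul_mem _ _ ?_)) (Submodule.smul_mem _ _ ?_)
    · exact Submodule.subset_span ⟨_, f0_mem A hA0 hA1 k, eb 0, Submodule.mem_top, rfl⟩
    · exact Submodule.subset_span ⟨_, f0_mem A hA0 hA1 k, eb 1, Submodule.mem_top, rfl⟩
    · exact Submodule.subset_span ⟨_, f1_mem A hA0 hA1 k, eb 0, Submodule.mem_top, rfl⟩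
    · exact Submodule.subset_span ⟨_, f1_mem A hA0 hA1 k, eb 1, Submodule.mem_top, rfl⟩
    · exact Submodule.subset_span ⟨_, fw_mem A hA0 hA1 k, eb 0, Submodule.mem_top, rfl⟩
    · exact Submodule.subset_span ⟨_, fw_mem A hA0 hA1 k, eb 1, Submodule.mem_top, rfl⟩

open Classical in
lemma part_a (A : Fin 2 → Matrix (Fin 2) (Fin 2) ℂ)
    (hA0 : A 0 = M0) (hA1 : A 1 = M1)
    (Y : Fin 2 → Matrix (Fin 2) (Fin 2) ℂ)
    (hY0 : Y 0 = A 0 * (1 - A 1)) (hY1 : Y 1 = A 1) :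
    (∀ i, ∀ M ∈ virtSpace A 3, Y i * M ∈ virtSpace A 2) ∧ (∑ i, A i * Y i) = 1 := by
  have hY0' : Y 0 = !![1,0;0,0] := by
    rw [hY0, hA0, hA1, M0, M1]
    ext i j
    fin_cases i <;> fin_cases j <;>
      simp [Matrix.mul_apply, Matrix.one_apply, Fin.sum_univ_two]
  have hY1' : Y 1 = M1 := by rw [hY1, hA1]
  -- membership of the four possible products in virtSpace A 2
  have hm0 : M0 ∈ virtSpace A 2 := by
    refine Submodule.subset_span ⟨![0,0], ?_⟩
    show prodA A ![0,0] = M0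
    rw [prodA_classify A hA0 hA1 1 ![0,0], if_pos (by decide)]
  have hm1 : M1 ∈ virtSpace A 2 := by
    refine Submodule.subset_span ⟨![1,1], ?_⟩
    show prodA A ![1,1] = M1
    rw [prodA_classify A hA0 hA1 1 ![1,1], if_neg (by decide), if_pos (by decide)]
  have hmE : ME ∈ virtSpace A 2 := by
    refine Submodule.subset_span ⟨![0,1], ?_⟩
    show prodA A ![0,1] = ME
    rw [prodA_classify A hA0 hA1 1 ![0,1], if_neg (by decide), if_neg (by decide),
      if_pos (show Srt ![0,1] by unfold Srt; decide)]
  constructor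
  · intro i
    have key : virtSpace A 3 ≤
        Submodule.comap (LinearMap.mulLeft ℂ (Y i)) (virtSpace A 2) := by
      rw [virtSpace, Submodule.span_le]
      rintro m ⟨s, rfl⟩
      simp only [Set.mem_setOf_eq, SetLike.mem_coe, Submodule.mem_comap,
        LinearMap.mulLeft_apply]
      rw [prodA_classify A hA0 hA1 2 s]
      rcases fin2cases i with rfl | rfl
      · rw [hY0']
        split_ifs
        · rw [show (!![1,0;0,0] : Matrix (Fin 2) (Fin 2) ℂ) * M0 = M0 by
            ext a b; fin_cases a <;> fin_cases b <;>
              simp [M0, Matrix.mul_apply, Fin.sum_univ_two]]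
          exact hm0
        · rw [show (!![1,0;0,0] : Matrix (Fin 2) (Fin 2) ℂ) * M1 = 0 by
            ext a b; fin_cases a <;> fin_cases b <;>
              simp [M1, Matrix.mul_apply, Fin.sum_univ_two]]
          exact zero_mem _
        · rw [show (!![1,0;0,0] : Matrix (Fin 2) (Fin 2) ℂ) * ME = ME by
            ext a b; fin_cases a <;> fin_cases b <;>
              simp [ME, Matrix.mul_apply, Fin.sum_univ_two]]
          exact hmE
        · rw [mul_zero]; exact zero_mem _
      · rw [hY1']
        split_ifs
        · rw [show M1 * M0 = 0 by
            ext a b; fin_cases a <;> fin_cases b <;>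
              simp [M0, M1, Matrix.mul_apply, Fin.sum_univ_two]]
          exact zero_mem _
        · rw [show M1 * M1 = M1 by
            ext a b; fin_cases a <;> fin_cases b <;>
              simp [M1, Matrix.mul_apply, Fin.sum_univ_two]]
          exact hm1
        · rw [show M1 * ME = 0 by
            ext a b; fin_cases a <;> fin_cases b <;>
              simp [M1, ME, Matrix.mul_apply, Fin.sum_univ_two]]
          exact zero_mem _
        · rw [mul_zero]; exact zero_mem _
    exact fun M hM => key hM
  · rw [Fin.sum_univ_two, hY0', hY1', hA0, hA1, M0, M1]
    ext i j
    fin_cases i <;> fin_cases j <;>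
      simp [Matrix.mul_apply, Matrix.one_apply, Fin.sum_univ_two]


/-- the domain-wall tensor is left 2-stable with Y₀ = A₀(1 − A₁), Y₁ = A₁ and
Z = A₀Y₀ + A₁Y₁ = 1; consequently (S_k ⊗ ℂ²) ∩ (ℂ² ⊗ S_k) = S_{k+1} for all k ≥ 3. -/
theorem domainWall_stable_and_intersection (A : Fin 2 → Matrix (Fin 2) (Fin 2) ℂ)
    (hA0 : A 0 = !![1, 1; 0, 0]) (hA1 : A 1 = !![0, 0; 0, 1])
    (Y : Fin 2 → Matrix (Fin 2) (Fin 2) ℂ)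
    (hY0 : Y 0 = A 0 * (1 - A 1)) (hY1 : Y 1 = A 1) :
    ((∀ i, ∀ M ∈ virtSpace A 3, Y i * M ∈ virtSpace A 2) ∧
      (∑ i, A i * Y i) = 1) ∧
    ∀ k, 3 ≤ k →
      tensSnoc (mpsSpace A k) ⊤ ⊓ tensCons ⊤ (mpsSpace A k) = mpsSpace A (k + 1) := by
  have hA0' : A 0 = M0 := hA0
  have hA1' : A 1 = M1 := hA1
  refine ⟨part_a A hA0' hA1' Y hY0 hY1, ?_⟩
  intro k hk
  obtain ⟨m, rfl⟩ : ∃ m, k = m + 3 := ⟨k - 3, by omega⟩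
  have h1 := tensSnoc_char A hA0' hA1' (m+1)
  have h2 := tensCons_char A hA0' hA1' (m+1)
  have h3 := inter_eq m
  have h4 := mpsSpace_eq A hA0' hA1' (m+2)
  have goal' : tensSnoc (mpsSpace A ((m+1)+2)) ⊤ ⊓ tensCons ⊤ (mpsSpace A ((m+1)+2))
      = mpsSpace A ((m+2)+2) := by
    rw [h1, h2, h4]
    exact h3
  exact goal'
end
end
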